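/- arXiv:1512.06547 — 6 statements merged into one kernel-verified Lean document; each statement's English description precedes it below -/
import Mathlib

section
/- Let k be a positive integer, Λ a finitely aligned k-graph, R a commutative ring with 1, A an R-algebra, and {S_λ, S_{μ*} : λ, μ ∈ Λ} a family in A satisfying (KP1), (KP2) and (KP3). Then for all λ, μ ∈ Λ one has S_λ S_{λ*} S_μ S_{μ*} = Σ_{λρ ∈ MCE(λ,μ)} S_{λρ} S_{(λρ)*}, and consequently the elements {S_λ S_{λ*} : λ ∈ Λ} pairwise commute. -/
/-- A higher-rank graph (`k`-graph): a countable small category together with a degree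
functor `d` into `ℕᵏ` satisfying the unique factorisation property.  The morphisms form the
type `Path`; the objects (vertices) are identified with the identity paths via `vertex`.
Composition `comp p q` is only meaningful when `src p = rng q`; all axioms are stated under
this compatibility assumption. -/
structure KGraph (k : ℕ) where
  Obj : Type
  Path : Type
  countable_obj : Countable Obj
  countable_path : Countable Path
  src : Path → Obj
  rng : Path → Obj
  vertex : Obj → Path
  comp : Path → Path → Path
  deg : Path → Fin k → ℕ
  src_vertex : ∀ v, src (vertex v) = v
  rng_vertex : ∀ v, rng (vertex v) = v
  deg_vertex : ∀ v, deg (vertex v) = 0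
  vertex_comp : ∀ p, comp (vertex (rng p)) p = p
  comp_vertex : ∀ p, comp p (vertex (src p)) = p
  src_comp : ∀ p q, src p = rng q → src (comp p q) = src q
  rng_comp : ∀ p q, src p = rng q → rng (comp p q) = rng p
  deg_comp : ∀ p q, src p = rng q → deg (comp p q) = deg p + deg q
  comp_assoc : ∀ p q r, src p = rng q → src q = rng r →
    comp (comp p q) r = comp p (comp q r)
  factorisation : ∀ (p : Path) (m n : Fin k → ℕ), deg p = m + n →
    ∃! x : Path × Path, src x.1 = rng x.2 ∧ deg x.1 = m ∧ deg x.2 = n ∧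
      comp x.1 x.2 = p

namespace KGraph

variable {k : ℕ} (Λ : KGraph k)

/-- `Λ^min(p,q)`: the pairs `(ρ,τ)` with `pρ = qτ` a minimal common extension of `p` and `q`. -/
def minPairs (p q : Λ.Path) : Set (Λ.Path × Λ.Path) :=
  {x | Λ.src p = Λ.rng x.1 ∧ Λ.src q = Λ.rng x.2 ∧
    Λ.comp p x.1 = Λ.comp q x.2 ∧
    Λ.deg (Λ.comp p x.1) = Λ.deg p ⊔ Λ.deg q}

/-- `MCE(p,q)`: minimal common extensions of `p` and `q`. -/
def MCE (p q : Λ.Path) : Set Λ.Path :=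
  {t | Λ.deg t = Λ.deg p ⊔ Λ.deg q ∧
    (∃ r, Λ.src p = Λ.rng r ∧ Λ.comp p r = t) ∧
    (∃ r, Λ.src q = Λ.rng r ∧ Λ.comp q r = t)}

/-- `Λ` is finitely aligned if all the sets `Λ^min(p,q)` are finite. -/
def FinitelyAligned : Prop := ∀ p q, (Λ.minPairs p q).Finite

/-- `E ⊆ vΛ` is exhaustive. -/
def Exhaustive (v : Λ.Obj) (E : Set Λ.Path) : Prop :=
  ∀ p, Λ.rng p = v → ∃ q ∈ E, (Λ.minPairs p q).Nonempty

/-- `E` is a finite exhaustive subset of `vΛ \ {v}`, i.e. an element of `FE(Λ)`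
with range vertex `v`. -/
def FE (v : Λ.Obj) (E : Set Λ.Path) : Prop :=
  E.Finite ∧ (∀ p ∈ E, Λ.rng p = v ∧ p ≠ Λ.vertex v) ∧ Λ.Exhaustive v E

/-- `Ext(p; E)`. -/
def extSet (p : Λ.Path) (E : Set Λ.Path) : Set Λ.Path :=
  ⋃ q ∈ E, {r | ∃ t, (r, t) ∈ Λ.minPairs p q}

section Family

variable {A : Type} [NonUnitalRing A]

/-- (KP1): the vertex elements are mutually orthogonal idempotents. -/
def KP1 (S : Λ.Path → A) : Prop :=
  (∀ v, S (Λ.vertex v) * S (Λ.vertex v) = S (Λ.vertex v)) ∧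
  ∀ v w, v ≠ w → S (Λ.vertex v) * S (Λ.vertex w) = 0

/-- (KP2): multiplicativity on composable paths and ghost paths.  Here `T μ` plays the
role of `S_{μ*}`. -/
def KP2 (S T : Λ.Path → A) : Prop :=
  ∀ p q, Λ.src p = Λ.rng q →
    S p * S q = S (Λ.comp p q) ∧ T q * T p = T (Λ.comp p q)

/-- (KP3): `S_{p*} S_q = ∑_{(ρ,τ) ∈ Λ^min(p,q)} S_ρ S_{τ*}` (empty sum read as `0`). -/
def KP3 (S T : Λ.Path → A) : Prop :=
  ∀ p q, T p * S q = ∑ᶠ x ∈ Λ.minPairs p q, S x.1 * T x.2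

/-- (KP4): `∏_{p ∈ E} (S_v - S_p S_{p*}) = 0` for every finite exhaustive
`E ⊆ vΛ \ {v}`.  The product is implemented as a fold over any duplicate-free list
enumerating `E`, with the harmless extra idempotent factor `S_v` in front. -/
def KP4 (S T : Λ.Path → A) : Prop :=
  ∀ (v : Λ.Obj) (l : List Λ.Path), l.Nodup → Λ.FE v {p | p ∈ l} →
    (l.map fun p => S (Λ.vertex v) - S p * T p).foldl (· * ·) (S (Λ.vertex v)) = 0

/-- A Kumjian–Pask `Λ`-family in a (not necessarily unital) ring: `S p` represents `s_p`
and `T p` represents the ghost element `s_{p*}`, with `T` and `S` agreeing on vertices. -/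
def IsKPFamily (S T : Λ.Path → A) : Prop :=
  (∀ v, T (Λ.vertex v) = S (Λ.vertex v)) ∧
  Λ.KP1 S ∧ Λ.KP2 S T ∧ Λ.KP3 S T ∧ Λ.KP4 S T

end Family

/-- `(B, s, t)` is *the* (universal) Kumjian–Pask algebra of `Λ` over `R`:
`(s, t)` is a Kumjian–Pask `Λ`-family generating `B`, and every Kumjian–Pask `Λ`-family
in an `R`-algebra `A` factors uniquely through it. -/
def IsUniversalKP (R : Type) [CommRing R] (B : Type) [NonUnitalRing B]
    [Module R B] [SMulCommClass R B B] [IsScalarTower R B B]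
    (s t : Λ.Path → B) : Prop :=
  Λ.IsKPFamily s t ∧
  NonUnitalAlgebra.adjoin R (Set.range s ∪ Set.range t) = ⊤ ∧
  ∀ (A : Type) [NonUnitalRing A] [Module R A] [SMulCommClass R A A]
    [IsScalarTower R A A] (S T : Λ.Path → A), Λ.IsKPFamily S T →
      ∃! π : B →ₙₐ[R] A, (∀ p, π (s p) = S p) ∧ (∀ p, π (t p) = T p)

/-- A boundary path of `Λ`: a degree-preserving functor `x : Ω_{k,m} → Λ`
(for `m = deg x ∈ (ℕ∪{∞})ᵏ`), recorded via its segments `seg p q = x(p,q)`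
for `p ≤ q ≤ m` (the value of `seg` outside this domain is junk), and satisfying
the boundary-path condition with respect to finite exhaustive sets. -/
structure BoundaryPath (Λ : KGraph k) where
  deg : Fin k → ℕ∞
  seg : (Fin k → ℕ) → (Fin k → ℕ) → Λ.Path
  deg_seg : ∀ p q, p ≤ q → (∀ i, (q i : ℕ∞) ≤ deg i) → Λ.deg (seg p q) = q - p
  seg_self : ∀ p, (∀ i, (p i : ℕ∞) ≤ deg i) →
    seg p p = Λ.vertex (Λ.src (seg p p))
  src_seg : ∀ p q r, p ≤ q → q ≤ r → (∀ i, (r i : ℕ∞) ≤ deg i) →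
    Λ.src (seg p q) = Λ.rng (seg q r)
  comp_seg : ∀ p q r, p ≤ q → q ≤ r → (∀ i, (r i : ℕ∞) ≤ deg i) →
    Λ.comp (seg p q) (seg q r) = seg p r
  boundary : ∀ n : Fin k → ℕ, (∀ i, (n i : ℕ∞) ≤ deg i) →
    ∀ E : Set Λ.Path, Λ.FE (Λ.src (seg n n)) E →
      ∃ p ∈ E, (∀ i, ((n + Λ.deg p) i : ℕ∞) ≤ deg i) ∧ seg n (n + Λ.deg p) = p

namespace BoundaryPath

variable {Λ : KGraph k}

/-- The vertex `x(n)` of a boundary path. -/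
def vtx (x : Λ.BoundaryPath) (n : Fin k → ℕ) : Λ.Obj := Λ.src (x.seg n n)

/-- The range `r(x) = x(0)` of a boundary path. -/
def rng (x : Λ.BoundaryPath) : Λ.Obj := x.vtx 0

end BoundaryPath

/-- `IsShift n x y` says that `y = σⁿ x` is the shift of the boundary path `x` by
`n ≤ d(x)`. -/
def IsShift (n : Fin k → ℕ) (x y : Λ.BoundaryPath) : Prop :=
  (∀ i, (n i : ℕ∞) ≤ x.deg i) ∧
  (∀ i, y.deg i = x.deg i - (n i : ℕ∞)) ∧
  ∀ p q, p ≤ q → (∀ i, (q i : ℕ∞) ≤ y.deg i) → y.seg p q = x.seg (n + p) (n + q)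

/-- `IsConcat p x y` says that `y = p·x` is the concatenation of the path `p` with the
boundary path `x` (so `y(0, d p) = p` and `σ^{d p} y = x`). -/
def IsConcat (p : Λ.Path) (x y : Λ.BoundaryPath) : Prop :=
  Λ.IsShift (Λ.deg p) y x ∧ y.seg 0 (Λ.deg p) = p

/-- A boundary path `x` is aperiodic if distinct paths with source `r(x)` give distinct
concatenations `p·x ≠ q·x`. -/
def AperiodicBP (x : Λ.BoundaryPath) : Prop :=
  ∀ p q, Λ.src p = x.rng → Λ.src q = x.rng → p ≠ q →
    ∀ y, Λ.IsConcat p x y → ¬Λ.IsConcat q x y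

/-- `Λ` is aperiodic: every vertex receives an aperiodic boundary path. -/
def Aperiodic : Prop :=
  ∀ v : Λ.Obj, ∃ x : Λ.BoundaryPath, x.rng = v ∧ Λ.AperiodicBP x

/-- `Λ` is cofinal: for every vertex `v` and boundary path `x` there is `n ≤ d(x)`
with `vΛx(n) ≠ ∅`. -/
def Cofinal : Prop :=
  ∀ (v : Λ.Obj) (x : Λ.BoundaryPath), ∃ n : Fin k → ℕ,
    (∀ i, (n i : ℕ∞) ≤ x.deg i) ∧ ∃ p, Λ.rng p = v ∧ Λ.src p = x.vtx n

/-- The boundary-path groupoid `G_Λ` as a set of triples `(x, m, y)` with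
`σᵖ x = σ^q y` and `m = p - q`. -/
def BPG : Set (Λ.BoundaryPath × (Fin k → ℤ) × Λ.BoundaryPath) :=
  {a | ∃ (p q : Fin k → ℕ) (z : Λ.BoundaryPath),
    (fun i => (p i : ℤ) - (q i : ℤ)) = a.2.1 ∧
    Λ.IsShift p a.1 z ∧ Λ.IsShift q a.2.2 z}

/-- `Z(p) = p ∂Λ`, the cylinder set of boundary paths with prefix `p`. -/
def ZC (p : Λ.Path) : Set Λ.BoundaryPath := {x | ∃ z, Λ.IsConcat p z x}

/-- `Z(p *ₛ q)`. -/
def ZP (p q : Λ.Path) : Set (Λ.BoundaryPath × (Fin k → ℤ) × Λ.BoundaryPath) :=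
  {a | a.2.1 = (fun i => (Λ.deg p i : ℤ) - (Λ.deg q i : ℤ)) ∧
    a.1 ∈ Λ.ZC p ∧ a.2.2 ∈ Λ.ZC q ∧
    ∃ z, Λ.IsShift (Λ.deg p) a.1 z ∧ Λ.IsShift (Λ.deg q) a.2.2 z}

/-- `Z(p *ₛ q \ G)`. -/
def ZPD (p q : Λ.Path) (G : Set Λ.Path) :
    Set (Λ.BoundaryPath × (Fin k → ℤ) × Λ.BoundaryPath) :=
  Λ.ZP p q \ ⋃ ν ∈ G, Λ.ZP (Λ.comp p ν) (Λ.comp q ν)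

/-- The boundary-path groupoid `G_Λ` as a type. -/
abbrev bpSpace : Type := {a // a ∈ Λ.BPG}

/-- The topology on `G_Λ` generated by the basic sets `Z(p *ₛ q \ G)` with `G` finite. -/
def bpTop : TopologicalSpace Λ.bpSpace :=
  TopologicalSpace.generateFrom
    {V | ∃ (p q : Λ.Path) (G : Set Λ.Path), Λ.src p = Λ.src q ∧
      (∀ ν ∈ G, Λ.rng ν = Λ.src p) ∧ G.Finite ∧
      V = Subtype.val ⁻¹' Λ.ZPD p q G}

theorem isShift_zero (x : Λ.BoundaryPath) : Λ.IsShift 0 x x :=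
  ⟨fun i => by simp, fun i => by simp, fun p q _ _ => by simp⟩

/-- The unit space `G_Λ^{(0)}` of the boundary-path groupoid. -/
def unitSet : Set Λ.bpSpace := {a | a.1.2.1 = 0 ∧ a.1.1 = a.1.2.2}

/-- The unit `(x, 0, x)` of `G_Λ` corresponding to a boundary path `x`. -/
def unitOf (x : Λ.BoundaryPath) : Λ.bpSpace :=
  ⟨(x, 0, x), ⟨0, 0, x, by funext i; simp, Λ.isShift_zero x, Λ.isShift_zero x⟩⟩

end KGraph

/-- for a family satisfying (KP1)–(KP3) in an `R`-algebra `A`,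
`S_p S_{p*} S_q S_{q*} = ∑_{pρ ∈ MCE(p,q)} S_{pρ} S_{(pρ)*}`, and the elements
`S_p S_{p*}` pairwise commute. -/
theorem kp_range_projections_commute {k : ℕ} (hk : 0 < k) (Λ : KGraph k)
    (hΛ : Λ.FinitelyAligned) (R : Type) [CommRing R]
    (A : Type) [NonUnitalRing A] [Module R A] [SMulCommClass R A A]
    [IsScalarTower R A A] (S T : Λ.Path → A)
    (hvx : ∀ v, T (Λ.vertex v) = S (Λ.vertex v))
    (h1 : Λ.KP1 S) (h2 : Λ.KP2 S T) (h3 : Λ.KP3 S T) :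
    (∀ p q, S p * T p * (S q * T q) = ∑ᶠ t ∈ Λ.MCE p q, S t * T t) ∧
    ∀ p q, S p * T p * (S q * T q) = S q * T q * (S p * T p) := by
  have key : ∀ p q, S p * T p * (S q * T q) = ∑ᶠ t ∈ Λ.MCE p q, S t * T t := by
    intro p q
    have hmin := hΛ p q
    set f : Λ.Path × Λ.Path → Λ.Path := fun x => Λ.comp p x.1 with hf
    have himg : Λ.MCE p q = f '' Λ.minPairs p q := by
      ext t
      constructor
      · rintro ⟨hdeg, ⟨ρ, hρ1, hρ2⟩, ⟨τ, hτ1, hτ2⟩⟩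
        exact ⟨(ρ, τ), ⟨hρ1, hτ1, by rw [hρ2, hτ2], by rw [hρ2, hdeg]⟩, hρ2⟩
      · rintro ⟨⟨ρ, τ⟩, ⟨ha, hb, hc, hd⟩, rfl⟩
        exact ⟨hd, ⟨ρ, ha, rfl⟩, ⟨τ, hb, hc.symm⟩⟩
    have hinj : Set.InjOn f (Λ.minPairs p q) := by
      rintro ⟨ρ, τ⟩ ⟨ha, hb, hc, hd⟩ ⟨ρ', τ'⟩ ⟨ha', hb', hc', hd'⟩ heq
      simp only [hf] at heq
      have e1 := Λ.deg_comp p ρ ha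
      have e2 := Λ.deg_comp p ρ' ha'
      have hdρ : Λ.deg ρ = Λ.deg ρ' := by
        have : Λ.deg p + Λ.deg ρ = Λ.deg p + Λ.deg ρ' := by rw [← e1, ← e2, heq]
        exact add_left_cancel this
      obtain ⟨x, hx, hxu⟩ := Λ.factorisation (Λ.comp p ρ) (Λ.deg p) (Λ.deg ρ) e1
      have g1 : ((p, ρ) : Λ.Path × Λ.Path) = x := hxu _ ⟨ha, rfl, rfl, rfl⟩
      have g2 : ((p, ρ') : Λ.Path × Λ.Path) = x := hxu _ ⟨ha', rfl, hdρ.symm, heq.symm⟩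
      have hρeq : ρ = ρ' := congrArg Prod.snd (g1.trans g2.symm)
      subst hρeq
      have heqτ : Λ.comp q τ = Λ.comp q τ' := by rw [← hc, ← hc', heq]
      have f1 := Λ.deg_comp q τ hb
      have f2 := Λ.deg_comp q τ' hb'
      have hdτ : Λ.deg τ = Λ.deg τ' := by
        have : Λ.deg q + Λ.deg τ = Λ.deg q + Λ.deg τ' := by rw [← f1, ← f2, heqτ]
        exact add_left_cancel this
      obtain ⟨y, hy, hyu⟩ := Λ.factorisation (Λ.comp q τ) (Λ.deg q) (Λ.deg τ) f1
      have g3 : ((q, τ) : Λ.Path × Λ.Path) = y := hyu _ ⟨hb, rfl, rfl, rfl⟩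
      have g4 : ((q, τ') : Λ.Path × Λ.Path) = y := hyu _ ⟨hb', rfl, hdτ.symm, heqτ.symm⟩
      have : τ = τ' := congrArg Prod.snd (g3.trans g4.symm)
      simp [this]
    have hset : Λ.minPairs p q = ↑hmin.toFinset := (Set.Finite.coe_toFinset hmin).symm
    have step1 : S p * T p * (S q * T q)
        = ∑ x ∈ hmin.toFinset, S p * (S x.1 * T x.2) * T q := by
      have : T p * S q = ∑ x ∈ hmin.toFinset, S x.1 * T x.2 := by
        rw [h3 p q, finsum_mem_eq_finite_toFinset_sum _ hmin]
      calc S p * T p * (S q * T q) = S p * (T p * S q) * T q := by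
            simp only [mul_assoc]
        _ = S p * (∑ x ∈ hmin.toFinset, S x.1 * T x.2) * T q := by rw [this]
        _ = ∑ x ∈ hmin.toFinset, S p * (S x.1 * T x.2) * T q := by
            rw [Finset.mul_sum, Finset.sum_mul]
    have step2 : ∀ x ∈ hmin.toFinset, S p * (S x.1 * T x.2) * T q = S (f x) * T (f x) := by
      rintro ⟨ρ, τ⟩ hx
      rw [Set.Finite.mem_toFinset] at hx
      obtain ⟨ha, hb, hc, hd⟩ := hx
      have e1 := (h2 p ρ ha).1
      have e2 := (h2 q τ hb).2
      calc S p * (S ρ * T τ) * T q = (S p * S ρ) * (T τ * T q) := by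
            simp only [mul_assoc]
        _ = S (Λ.comp p ρ) * T (Λ.comp q τ) := by rw [e1, e2]
        _ = S (f (ρ, τ)) * T (f (ρ, τ)) := by simp only [hf]; rw [hc]
    classical
    rw [step1, Finset.sum_congr rfl step2, himg,
      finsum_mem_eq_finite_toFinset_sum _ (hmin.image f),
      Set.Finite.toFinset_image f hmin (hmin.image f), Finset.sum_image]
    intro x hx y hy h
    exact hinj (by rwa [← Set.Finite.mem_toFinset hmin]) (by rwa [← Set.Finite.mem_toFinset hmin]) h
  have hsym : ∀ p q, Λ.MCE p q = Λ.MCE q p := by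
    intro p q
    ext t
    simp only [KGraph.MCE, Set.mem_setOf_eq, sup_comm (Λ.deg p)]
    tauto
  exact ⟨key, fun p q => by rw [key p q, key q p, hsym p q]⟩
end

section
/- Let k be a positive integer, Λ a finitely aligned k-graph, R a commutative ring with 1, A an R-algebra, and {S_λ, S_{μ*} : λ, μ ∈ Λ} a family in A satisfying (KP1), (KP2) and (KP3). Then for every n ∈ ℕ^k and all λ, μ ∈ Λ^{≤n}, one has S_{λ*} S_μ = δ_{λ,μ} S_{s(λ)} (that is, S_{λ*} S_μ = S_{s(λ)} if λ = μ, and S_{λ*} S_μ = 0 if λ ≠ μ). -/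
/-- The set `Λ^{≤ n}`. -/
def KGraph.bddPaths {k : ℕ} (Λ : KGraph k) (n : Fin k → ℕ) : Set Λ.Path :=
  {p | Λ.deg p ≤ n ∧ ∀ i, Λ.deg p i < n i →
    ¬∃ e, Λ.rng e = Λ.src p ∧ Λ.deg e = Pi.single i 1}

/-- A path of degree zero is the vertex at its range (and its range equals its source). -/
lemma KGraph.deg_zero_eq_vertex {k : ℕ} (Λ : KGraph k) (p : Λ.Path)
    (h : Λ.deg p = 0) : p = Λ.vertex (Λ.rng p) ∧ Λ.rng p = Λ.src p := by
  obtain ⟨x, _, hu⟩ := Λ.factorisation p 0 0 (by simp [h])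
  have h1 := hu (Λ.vertex (Λ.rng p), p)
    ⟨by simp [Λ.src_vertex, Λ.rng_vertex], by simp [Λ.deg_vertex], h, Λ.vertex_comp p⟩
  have h2 := hu (p, Λ.vertex (Λ.src p))
    ⟨by simp [Λ.src_vertex, Λ.rng_vertex], h, by simp [Λ.deg_vertex], Λ.comp_vertex p⟩
  have h12 : (Λ.vertex (Λ.rng p), p) = (p, Λ.vertex (Λ.src p)) := h1.trans h2.symm
  have hp : p = Λ.vertex (Λ.rng p) := (congrArg Prod.fst h12).symm
  refine ⟨hp, ?_⟩
  conv_rhs => rw [hp]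
  rw [Λ.src_vertex]

/-- If a path has positive degree in direction `i`, an edge of degree `eᵢ` leaves its
range vertex. -/
lemma KGraph.exists_edge {k : ℕ} (Λ : KGraph k) (ρ : Λ.Path) (i : Fin k)
    (h : 0 < Λ.deg ρ i) : ∃ e, Λ.rng e = Λ.rng ρ ∧ Λ.deg e = Pi.single i 1 := by
  have hd : Λ.deg ρ = Pi.single i 1 + fun j => Λ.deg ρ j - (Pi.single i 1 : Fin k → ℕ) j := by
    funext j
    by_cases hj : j = i <;> simp [Pi.single_apply, hj] <;> omega
  obtain ⟨⟨e, ρ'⟩, ⟨hsr, hde, _, hcomp⟩, _⟩ := Λ.factorisation ρ _ _ hd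
  exact ⟨e, by rw [← hcomp, Λ.rng_comp e ρ' hsr], hde⟩

/-- For `p, q ∈ Λ^{≤n}`, any minimal pair forces `p = q` and is the trivial pair. -/
lemma KGraph.minPairs_bdd {k : ℕ} (Λ : KGraph k) (n : Fin k → ℕ) (p q : Λ.Path)
    (hp : p ∈ Λ.bddPaths n) (hq : q ∈ Λ.bddPaths n) (ρ τ : Λ.Path)
    (h : (ρ, τ) ∈ Λ.minPairs p q) :
    p = q ∧ ρ = Λ.vertex (Λ.src p) ∧ τ = Λ.vertex (Λ.src q) := by
  obtain ⟨h1, h2, h3, h4⟩ := h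
  have hdegρ : Λ.deg p + Λ.deg ρ = Λ.deg p ⊔ Λ.deg q := by
    rw [← Λ.deg_comp p ρ h1]; exact h4
  have hdegτ : Λ.deg q + Λ.deg τ = Λ.deg p ⊔ Λ.deg q := by
    rw [← Λ.deg_comp q τ h2, ← h3]; exact h4
  have hρ0 : Λ.deg ρ = 0 := by
    by_contra hne
    obtain ⟨i, hi⟩ : ∃ i, 0 < Λ.deg ρ i := by
      by_contra hc
      push_neg at hc
      exact hne (funext fun i => Nat.le_zero.mp (hc i))
    have hp' : Λ.deg p i < n i := by
      have hmax : Λ.deg p i + Λ.deg ρ i = max (Λ.deg p i) (Λ.deg q i) :=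
        congrFun hdegρ i
      have hqn : Λ.deg q i ≤ n i := hq.1 i
      omega
    obtain ⟨e, he1, he2⟩ := Λ.exists_edge ρ i hi
    exact hp.2 i hp' ⟨e, by rw [he1, ← h1], he2⟩
  have hτ0 : Λ.deg τ = 0 := by
    by_contra hne
    obtain ⟨i, hi⟩ : ∃ i, 0 < Λ.deg τ i := by
      by_contra hc
      push_neg at hc
      exact hne (funext fun i => Nat.le_zero.mp (hc i))
    have hq' : Λ.deg q i < n i := by
      have hmax : Λ.deg q i + Λ.deg τ i = max (Λ.deg p i) (Λ.deg q i) :=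
        congrFun hdegτ i
      have hpn : Λ.deg p i ≤ n i := hp.1 i
      omega
    obtain ⟨e, he1, he2⟩ := Λ.exists_edge τ i hi
    exact hq.2 i hq' ⟨e, by rw [he1, ← h2], he2⟩
  obtain ⟨hρv, hρr⟩ := Λ.deg_zero_eq_vertex ρ hρ0
  obtain ⟨hτv, hτr⟩ := Λ.deg_zero_eq_vertex τ hτ0
  have hρ : ρ = Λ.vertex (Λ.src p) := by rw [hρv, ← h1]
  have hτ : τ = Λ.vertex (Λ.src q) := by rw [hτv, ← h2]
  have hpq : p = q := by
    have hcp : Λ.comp p ρ = p := by rw [hρ, Λ.comp_vertex]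
    have hcq : Λ.comp q τ = q := by rw [hτ, Λ.comp_vertex]
    rw [← hcp, ← hcq]; exact h3
  exact ⟨hpq, hρ, hτ⟩

/-- for a family satisfying (KP1)–(KP3) and `p, q ∈ Λ^{≤n}`,
`S_{p*} S_q = δ_{p,q} S_{s(p)}`. -/
theorem kp_bdd_orthogonality {k : ℕ} (hk : 0 < k) (Λ : KGraph k)
    (hΛ : Λ.FinitelyAligned) (R : Type) [CommRing R]
    (A : Type) [NonUnitalRing A] [Module R A] [SMulCommClass R A A]
    [IsScalarTower R A A] (S T : Λ.Path → A)
    (hvx : ∀ v, T (Λ.vertex v) = S (Λ.vertex v))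
    (h1 : Λ.KP1 S) (h2 : Λ.KP2 S T) (h3 : Λ.KP3 S T) :
    ∀ n : Fin k → ℕ, ∀ p ∈ Λ.bddPaths n, ∀ q ∈ Λ.bddPaths n,
      (p = q → T p * S q = S (Λ.vertex (Λ.src p))) ∧
      (p ≠ q → T p * S q = 0) := by
  intro n p hp q hq
  constructor
  · rintro rfl
    have hset : Λ.minPairs p p = {(Λ.vertex (Λ.src p), Λ.vertex (Λ.src p))} := by
      ext ⟨ρ, τ⟩
      constructor
      · intro hx
        obtain ⟨_, hρ, hτ⟩ := Λ.minPairs_bdd n p p hp hp ρ τ hx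
        simp [hρ, hτ]
      · rintro hx
        rw [Set.mem_singleton_iff, Prod.mk.injEq] at hx
        obtain ⟨rfl, rfl⟩ := hx
        exact ⟨(Λ.rng_vertex _).symm, (Λ.rng_vertex _).symm,
          rfl, by rw [Λ.comp_vertex]; simp⟩
    rw [h3 p p, hset, finsum_mem_singleton, hvx, h1.1]
  · intro hne
    have hset : Λ.minPairs p q = ∅ := by
      ext ⟨ρ, τ⟩
      simp only [Set.mem_empty_iff_false, iff_false]
      intro hx
      exact hne (Λ.minPairs_bdd n p q hp hq ρ τ hx).1
    rw [h3 p q, hset, finsum_mem_empty]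
end

section
/- Let k be a positive integer, Λ a finitely aligned k-graph, R a commutative ring with 1, A an R-algebra, and {S_λ, S_{μ*} : λ, μ ∈ Λ} a family in A satisfying (KP1), (KP2) and (KP3). Suppose that r S_v ≠ 0 for all r ∈ R\{0} and all vertices v ∈ Λ^0. Then for every r ∈ R\{0}, every λ ∈ Λ one has r S_λ ≠ 0; and for all λ, μ ∈ Λ with s(λ) = s(μ), every r ∈ R\{0}, and every finite non-exhaustive subset G ⊆ s(λ)Λ, one has r S_λ ( ∏_{ν ∈ G} (S_{s(λ)} − S_ν S_{ν*}) ) S_{μ*} ≠ 0. -/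
private lemma kp_foldl_mul_left {A : Type} [NonUnitalRing A] (c : A) :
    ∀ (l : List A) (b : A), c * l.foldl (· * ·) b = l.foldl (· * ·) (c * b)
  | [], b => rfl
  | a :: l, b => by
      rw [List.foldl_cons, List.foldl_cons, kp_foldl_mul_left c l (b * a), mul_assoc]

private lemma kp_foldl_absorb_right {A : Type} [NonUnitalRing A] (e : A) :
    ∀ (l : List A) (b : A), (∀ a ∈ l, a * e = a) → b * e = b →
      l.foldl (· * ·) b * e = l.foldl (· * ·) b
  | [], _, _, hb => hb
  | a :: l, b, hl, hb => by
      rw [List.foldl_cons]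
      exact kp_foldl_absorb_right e l (b * a)
        (fun x hx => hl x (List.mem_cons_of_mem _ hx))
        (by rw [mul_assoc, hl a (List.mem_cons_self)])

private lemma kp_foldl_absorb_left {A : Type} [NonUnitalRing A] :
    ∀ (l : List A) (c : A), (∀ a ∈ l, c * a = c) → l.foldl (· * ·) c = c
  | [], _, _ => rfl
  | a :: l, c, h => by
      rw [List.foldl_cons, h a (List.mem_cons_self)]
      exact kp_foldl_absorb_left l c fun x hx => h x (List.mem_cons_of_mem _ hx)

private lemma kp_minPairs_self {k : ℕ} (Λ : KGraph k) (p : Λ.Path) :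
    Λ.minPairs p p = {(Λ.vertex (Λ.src p), Λ.vertex (Λ.src p))} := by
  ext ⟨ρ, τ⟩
  constructor
  · rintro ⟨ha, hb, hc, hd⟩
    have hdp : Λ.deg (Λ.comp p ρ) = Λ.deg p := by rw [hd, sup_idem]
    have hρ0 : Λ.deg ρ = 0 := by
      have := Λ.deg_comp p ρ ha
      rw [hdp] at this
      exact (add_eq_left.mp this.symm)
    have hτ0 : Λ.deg τ = 0 := by
      have := Λ.deg_comp p τ hb
      rw [← hc, hdp] at this
      exact (add_eq_left.mp this.symm)
    obtain ⟨x, -, hu⟩ := Λ.factorisation (Λ.comp p ρ) (Λ.deg p) 0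
      (by rw [hdp, add_zero])
    have e1 : ((p, ρ) : Λ.Path × Λ.Path) = x := hu (p, ρ) ⟨ha, rfl, hρ0, rfl⟩
    have e2 : ((Λ.comp p ρ, Λ.vertex (Λ.src (Λ.comp p ρ))) : Λ.Path × Λ.Path) = x :=
      hu _ ⟨(Λ.rng_vertex _).symm, hdp, Λ.deg_vertex _, Λ.comp_vertex _⟩
    have e3 : ((p, τ) : Λ.Path × Λ.Path) = x := hu (p, τ) ⟨hb, rfl, hτ0, hc.symm⟩
    have hpρ : p = Λ.comp p ρ := by
      have := congrArg Prod.fst (e1.trans e2.symm); simpa using this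
    have hρ : ρ = Λ.vertex (Λ.src p) := by
      have := congrArg Prod.snd (e1.trans e2.symm)
      simpa [← hpρ] using this
    have hτ : τ = ρ := by
      have := congrArg Prod.snd (e3.trans e1.symm); simpa using this
    simp [hρ, hτ]
  · rintro h
    rw [Set.mem_singleton_iff] at h
    have hρ : ρ = Λ.vertex (Λ.src p) := congrArg Prod.fst h
    have hτ : τ = Λ.vertex (Λ.src p) := congrArg Prod.snd h
    subst hρ; subst hτ
    refine ⟨(Λ.rng_vertex _).symm, (Λ.rng_vertex _).symm, rfl, ?_⟩
    rw [Λ.comp_vertex, sup_idem]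

/-- if `r • S_v ≠ 0` for all `r ≠ 0` and vertices `v`, then `r • S_p ≠ 0`
for all paths `p`, and for all `p, q` with `s(p) = s(q)` and every finite non-exhaustive
`G ⊆ s(p)Λ` (enumerated by a duplicate-free list `l`),
`r • (S_p (∏_{ν ∈ G} (S_{s(p)} - S_ν S_{ν*})) S_{q*}) ≠ 0`. -/
theorem kp_nonzero_products {k : ℕ} (hk : 0 < k) (Λ : KGraph k)
    (hΛ : Λ.FinitelyAligned) (R : Type) [CommRing R]
    (A : Type) [NonUnitalRing A] [Module R A] [SMulCommClass R A A]
    [IsScalarTower R A A] (S T : Λ.Path → A)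
    (hvx : ∀ v, T (Λ.vertex v) = S (Λ.vertex v))
    (h1 : Λ.KP1 S) (h2 : Λ.KP2 S T) (h3 : Λ.KP3 S T)
    (hS : ∀ r : R, r ≠ 0 → ∀ v, r • S (Λ.vertex v) ≠ 0) :
    (∀ r : R, r ≠ 0 → ∀ p, r • S p ≠ 0) ∧
    ∀ p q, Λ.src p = Λ.src q → ∀ r : R, r ≠ 0 →
      ∀ l : List Λ.Path, l.Nodup → (∀ ν ∈ l, Λ.rng ν = Λ.src p) →
        ¬Λ.Exhaustive (Λ.src p) {ν | ν ∈ l} →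
        r • (S p *
          (l.map fun ν => S (Λ.vertex (Λ.src p)) - S ν * T ν).foldl (· * ·)
            (S (Λ.vertex (Λ.src p))) * T q) ≠ 0 := by
  -- key diagonal identity: T p * S p = S (vertex (src p))
  have key : ∀ p, T p * S p = S (Λ.vertex (Λ.src p)) := by
    intro p
    rw [h3 p p, kp_minPairs_self, finsum_mem_singleton]
    simp only [hvx]
    exact h1.1 _
  constructor
  · intro r hr p h
    have h' := congrArg (fun x => T p * x) h
    simp only [mul_smul_comm, mul_zero, smul_zero] at h'
    rw [key p] at h'
    exact hS r hr _ h'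
  · intro p q hpq r hr l hnd hl hne h
    set v := Λ.src p with hv
    -- a non-exhaustive witness
    rw [KGraph.Exhaustive] at hne
    push_neg at hne
    obtain ⟨lam, hrlam, hempty⟩ := hne
    have hempty' : ∀ ν ∈ l, Λ.minPairs lam ν = ∅ := fun ν hν => hempty ν hν
    -- absorption facts
    have hTabs : ∀ μ, Λ.rng μ = v → T μ * S (Λ.vertex v) = T μ := by
      intro μ hμ
      have := (h2 (Λ.vertex v) μ (by rw [Λ.src_vertex, hμ])).2
      rw [hvx] at this
      rw [this, ← hμ, Λ.vertex_comp]
    have hSabs : ∀ ν ∈ l, S (Λ.vertex v) * S ν = S ν := by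
      intro ν hν
      have := (h2 (Λ.vertex v) ν (by rw [Λ.src_vertex, hl ν hν])).1
      rw [this, ← hl ν hν, Λ.vertex_comp]
    set fl : List A := l.map fun ν => S (Λ.vertex v) - S ν * T ν with hfl
    set P : A := fl.foldl (· * ·) (S (Λ.vertex v)) with hPdef
    have hP1 : S (Λ.vertex v) * P = P := by
      rw [hPdef, kp_foldl_mul_left, h1.1 v]
    have hP2 : P * S (Λ.vertex v) = P := by
      refine kp_foldl_absorb_right _ _ _ ?_ (h1.1 v)
      intro a ha
      rw [hfl, List.mem_map] at ha
      obtain ⟨ν, hν, rfl⟩ := ha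
      rw [sub_mul, h1.1 v, mul_assoc, hTabs ν (by rw [hl ν hν])]
    have hP3 : T lam * P = T lam := by
      rw [hPdef, kp_foldl_mul_left, hTabs lam hrlam]
      refine kp_foldl_absorb_left _ _ ?_
      intro a ha
      rw [hfl, List.mem_map] at ha
      obtain ⟨ν, hν, rfl⟩ := ha
      have hz : T lam * S ν = 0 := by
        rw [h3 lam ν, hempty' ν hν, finsum_mem_empty]
      rw [mul_sub, hTabs lam hrlam, ← mul_assoc, hz, zero_mul, sub_zero]
    have c1 : T p * (S p * P * T q) * S q = P := by
      simp only [← mul_assoc]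
      rw [key p, ← hv, hP1, mul_assoc P, key q, ← hpq, hP2]
    have c2 : T lam * P * S lam = S (Λ.vertex (Λ.src lam)) := by
      rw [hP3, key lam]
    have h' := congrArg (fun x => T lam * (T p * x * S q) * S lam) h
    simp only [mul_smul_comm, smul_mul_assoc, smul_zero, mul_zero, zero_mul] at h'
    rw [c1, c2] at h'
    exact hS r hr _ h'
end

section
/- Let k be a positive integer, Λ a finitely aligned k-graph, and R a commutative ring with 1. Then there exists an R-algebra KP_R(Λ) generated by a Kumjian-Pask Λ-family {s_λ, s_{μ*} : λ, μ ∈ Λ} which is universal: whenever {S_λ, S_{μ*} : λ, μ ∈ Λ} is a Kumjian-Pask Λ-family in an R-algebra A, there exists a unique R-algebra homomorphism π_S : KP_R(Λ) → A such that π_S(s_λ) = S_λ and π_S(s_{μ*}) = S_{μ*} for all λ, μ ∈ Λ. -/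
/-- A bundled universal Kumjian–Pask algebra for `Λ` over `R`. -/
structure UniversalKPAlgebra (R : Type) [CommRing R] {k : ℕ} (Λ : KGraph k) where
  carrier : Type
  [ring : NonUnitalRing carrier]
  [mod : Module R carrier]
  [sc : SMulCommClass R carrier carrier]
  [st : IsScalarTower R carrier carrier]
  s : Λ.Path → carrier
  t : Λ.Path → carrier
  univ : Λ.IsUniversalKP R carrier s t

section KPConstruction

theorem foldl_map_mulHom {M N F : Type*} [Mul M] [Mul N] [FunLike F M N]
    [MulHomClass F M N] (f : F) (l : List M) (a : M) :
    f (l.foldl (· * ·) a) = (l.map (f ·)).foldl (· * ·) (f a) := by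
  induction l generalizing a with
  | nil => simp
  | cons x xs ih => simp [ih]

variable {k : ℕ} (Λ : KGraph k) (R : Type) [CommRing R]

/-- s-generator in the free algebra. -/
noncomputable def kps (p : Λ.Path) : FreeAlgebra R (Λ.Path ⊕ Λ.Path) :=
  FreeAlgebra.ι R (Sum.inl p)

/-- t-generator (ghost path) in the free algebra. -/
noncomputable def kpt (p : Λ.Path) : FreeAlgebra R (Λ.Path ⊕ Λ.Path) :=
  FreeAlgebra.ι R (Sum.inr p)

/-- The Kumjian–Pask relations. -/
inductive KPRel {k : ℕ} (Λ : KGraph k) (R : Type) [CommRing R] (hΛ : Λ.FinitelyAligned) :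
    FreeAlgebra R (Λ.Path ⊕ Λ.Path) → FreeAlgebra R (Λ.Path ⊕ Λ.Path) → Prop
  | tv (v : Λ.Obj) : KPRel Λ R hΛ (kpt Λ R (Λ.vertex v)) (kps Λ R (Λ.vertex v))
  | idem (v : Λ.Obj) :
      KPRel Λ R hΛ (kps Λ R (Λ.vertex v) * kps Λ R (Λ.vertex v)) (kps Λ R (Λ.vertex v))
  | orth (v w : Λ.Obj) (h : v ≠ w) :
      KPRel Λ R hΛ (kps Λ R (Λ.vertex v) * kps Λ R (Λ.vertex w)) 0
  | mulS (p q : Λ.Path) (h : Λ.src p = Λ.rng q) :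
      KPRel Λ R hΛ (kps Λ R p * kps Λ R q) (kps Λ R (Λ.comp p q))
  | mulT (p q : Λ.Path) (h : Λ.src p = Λ.rng q) :
      KPRel Λ R hΛ (kpt Λ R q * kpt Λ R p) (kpt Λ R (Λ.comp p q))
  | kp3 (p q : Λ.Path) :
      KPRel Λ R hΛ (kpt Λ R p * kps Λ R q)
        (∑ x ∈ (hΛ p q).toFinset, kps Λ R x.1 * kpt Λ R x.2)
  | kp4 (v : Λ.Obj) (l : List Λ.Path) (hl : l.Nodup) (hFE : Λ.FE v {p | p ∈ l}) :
      KPRel Λ R hΛ ((l.map fun p => kps Λ R (Λ.vertex v) - kps Λ R p * kpt Λ R p).foldl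
        (· * ·) (kps Λ R (Λ.vertex v))) 0

variable (hΛ : Λ.FinitelyAligned)

/-- The (unital hull of the) Kumjian–Pask algebra. -/
abbrev KPQ : Type := RingQuot (KPRel Λ R hΛ)

noncomputable def kpmk : FreeAlgebra R (Λ.Path ⊕ Λ.Path) →ₐ[R] KPQ Λ R hΛ :=
  RingQuot.mkAlgHom R _

noncomputable def kpsQ (p : Λ.Path) : KPQ Λ R hΛ := kpmk Λ R hΛ (kps Λ R p)
noncomputable def kptQ (p : Λ.Path) : KPQ Λ R hΛ := kpmk Λ R hΛ (kpt Λ R p)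

theorem kptQ_vertex (v : Λ.Obj) : kptQ Λ R hΛ (Λ.vertex v) = kpsQ Λ R hΛ (Λ.vertex v) :=
  RingQuot.mkAlgHom_rel R (KPRel.tv (Λ := Λ) (R := R) (hΛ := hΛ) v)

theorem kpsQ_idem (v : Λ.Obj) :
    kpsQ Λ R hΛ (Λ.vertex v) * kpsQ Λ R hΛ (Λ.vertex v) = kpsQ Λ R hΛ (Λ.vertex v) := by
  have := RingQuot.mkAlgHom_rel R (KPRel.idem (Λ := Λ) (R := R) (hΛ := hΛ) v)
  simpa [kpsQ, kpmk, map_mul] using this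

theorem kpsQ_orth (v w : Λ.Obj) (h : v ≠ w) :
    kpsQ Λ R hΛ (Λ.vertex v) * kpsQ Λ R hΛ (Λ.vertex w) = 0 := by
  have := RingQuot.mkAlgHom_rel R (KPRel.orth (Λ := Λ) (R := R) (hΛ := hΛ) v w h)
  simpa [kpsQ, kpmk, map_mul] using this

theorem kpsQ_mul (p q : Λ.Path) (h : Λ.src p = Λ.rng q) :
    kpsQ Λ R hΛ p * kpsQ Λ R hΛ q = kpsQ Λ R hΛ (Λ.comp p q) := by
  have := RingQuot.mkAlgHom_rel R (KPRel.mulS (Λ := Λ) (R := R) (hΛ := hΛ) p q h)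
  simpa [kpsQ, kpmk, map_mul] using this

theorem kptQ_mul (p q : Λ.Path) (h : Λ.src p = Λ.rng q) :
    kptQ Λ R hΛ q * kptQ Λ R hΛ p = kptQ Λ R hΛ (Λ.comp p q) := by
  have := RingQuot.mkAlgHom_rel R (KPRel.mulT (Λ := Λ) (R := R) (hΛ := hΛ) p q h)
  simpa [kptQ, kpmk, map_mul] using this

theorem kpQ_kp3 (p q : Λ.Path) :
    kptQ Λ R hΛ p * kpsQ Λ R hΛ q =
      ∑ x ∈ (hΛ p q).toFinset, kpsQ Λ R hΛ x.1 * kptQ Λ R hΛ x.2 := by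
  have := RingQuot.mkAlgHom_rel R (KPRel.kp3 (Λ := Λ) (R := R) (hΛ := hΛ) p q)
  simpa [kpsQ, kptQ, kpmk, map_mul, map_sum] using this

theorem kpQ_kp4 (v : Λ.Obj) (l : List Λ.Path) (hl : l.Nodup)
    (hFE : Λ.FE v {p | p ∈ l}) :
    (l.map fun p => kpsQ Λ R hΛ (Λ.vertex v) - kpsQ Λ R hΛ p * kptQ Λ R hΛ p).foldl
      (· * ·) (kpsQ Λ R hΛ (Λ.vertex v)) = 0 := by
  have h := RingQuot.mkAlgHom_rel R (KPRel.kp4 (Λ := Λ) (R := R) (hΛ := hΛ) v l hl hFE)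
  rw [map_zero, foldl_map_mulHom] at h
  simpa [List.map_map, Function.comp_def, map_sub, map_mul, kpsQ, kptQ, kpmk] using h

/-- The Kumjian–Pask algebra: the non-unital subalgebra generated by the family. -/
noncomputable def KPB : NonUnitalSubalgebra R (KPQ Λ R hΛ) :=
  NonUnitalAlgebra.adjoin R (Set.range (kpsQ Λ R hΛ) ∪ Set.range (kptQ Λ R hΛ))

theorem kpsQ_mem (p : Λ.Path) : kpsQ Λ R hΛ p ∈ KPB Λ R hΛ :=
  NonUnitalAlgebra.subset_adjoin R (Or.inl ⟨p, rfl⟩)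

theorem kptQ_mem (p : Λ.Path) : kptQ Λ R hΛ p ∈ KPB Λ R hΛ :=
  NonUnitalAlgebra.subset_adjoin R (Or.inr ⟨p, rfl⟩)

noncomputable def kpsB (p : Λ.Path) : KPB Λ R hΛ := ⟨kpsQ Λ R hΛ p, kpsQ_mem Λ R hΛ p⟩
noncomputable def kptB (p : Λ.Path) : KPB Λ R hΛ := ⟨kptQ Λ R hΛ p, kptQ_mem Λ R hΛ p⟩

end KPConstruction

section KPB2

variable {k : ℕ} (Λ : KGraph k) (R : Type) [CommRing R] (hΛ : Λ.FinitelyAligned)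

theorem kpB_coe_foldl (m : List (KPB Λ R hΛ)) (a : KPB Λ R hΛ) :
    ((m.foldl (· * ·) a : KPB Λ R hΛ) : KPQ Λ R hΛ) =
      (m.map (Subtype.val)).foldl (· * ·) ↑a := by
  induction m generalizing a with
  | nil => rfl
  | cons x xs ih => simpa using ih (a * x)

theorem kpB_family : Λ.IsKPFamily (kpsB Λ R hΛ) (kptB Λ R hΛ) := by
  refine ⟨fun v => Subtype.ext (kptQ_vertex Λ R hΛ v),
    ⟨fun v => Subtype.ext (kpsQ_idem Λ R hΛ v),
     fun v w h => Subtype.ext (kpsQ_orth Λ R hΛ v w h)⟩,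
    fun p q h => ⟨Subtype.ext (kpsQ_mul Λ R hΛ p q h),
      Subtype.ext (kptQ_mul Λ R hΛ p q h)⟩, fun p q => ?_, fun v l hl hFE => ?_⟩
  · rw [← Set.Finite.coe_toFinset (hΛ p q), finsum_mem_coe_finset]
    apply Subtype.ext
    push_cast
    exact kpQ_kp3 Λ R hΛ p q
  · apply Subtype.ext
    rw [kpB_coe_foldl, List.map_map]
    have hc : (Subtype.val ∘ fun p =>
        kpsB Λ R hΛ (Λ.vertex v) - kpsB Λ R hΛ p * kptB Λ R hΛ p) =
        fun p => kpsQ Λ R hΛ (Λ.vertex v) - kpsQ Λ R hΛ p * kptQ Λ R hΛ p := by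
      funext p; simp [kpsB, kptB]
    rw [hc]
    exact kpQ_kp4 Λ R hΛ v l hl hFE

theorem kpB_adjoin_top :
    NonUnitalAlgebra.adjoin R
      (Set.range (kpsB Λ R hΛ) ∪ Set.range (kptB Λ R hΛ)) = ⊤ := by
  rw [eq_top_iff]
  rintro b -
  set K := NonUnitalAlgebra.adjoin R
    (Set.range (kpsB Λ R hΛ) ∪ Set.range (kptB Λ R hΛ)) with hK
  have hmap : KPB Λ R hΛ ≤
      K.map (NonUnitalSubalgebraClass.subtype (KPB Λ R hΛ)) := by
    apply NonUnitalAlgebra.adjoin_le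
    rintro x (⟨p, rfl⟩ | ⟨p, rfl⟩)
    · exact ⟨kpsB Λ R hΛ p, NonUnitalAlgebra.subset_adjoin R (Or.inl ⟨p, rfl⟩), rfl⟩
    · exact ⟨kptB Λ R hΛ p, NonUnitalAlgebra.subset_adjoin R (Or.inr ⟨p, rfl⟩), rfl⟩
  obtain ⟨y, hy, hyb⟩ := hmap b.2
  have : y = b := Subtype.ext hyb
  exact this ▸ hy

end KPB2


set_option maxHeartbeats 1000000 in
set_option synthInstance.maxHeartbeats 200000 in
/-- existence of the universal Kumjian–Pask algebra `KP_R(Λ)`. -/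
theorem exists_universal_kumjian_pask {k : ℕ} (hk : 0 < k) (Λ : KGraph k)
    (hΛ : Λ.FinitelyAligned) (R : Type) [CommRing R] :
    Nonempty (UniversalKPAlgebra R Λ) := by
  classical
  refine ⟨UniversalKPAlgebra.mk (carrier := KPB Λ R hΛ) (s := kpsB Λ R hΛ)
    (t := kptB Λ R hΛ) ⟨kpB_family Λ R hΛ, kpB_adjoin_top Λ R hΛ, ?_⟩⟩
  intro A _ _ _ _ S T hST
  obtain ⟨htv, ⟨h1a, h1b⟩, h2, h3, h4⟩ := hST
  -- the lift to the unitization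
  set f : FreeAlgebra R (Λ.Path ⊕ Λ.Path) →ₐ[R] Unitization R A :=
    FreeAlgebra.lift R (Sum.elim (fun p => (S p : Unitization R A))
      (fun p => (T p : Unitization R A))) with hf
  have fs : ∀ p, f (kps Λ R p) = (S p : Unitization R A) := fun p => by
    simp [hf, kps, FreeAlgebra.lift_ι_apply]
  have ft : ∀ p, f (kpt Λ R p) = (T p : Unitization R A) := fun p => by
    simp [hf, kpt, FreeAlgebra.lift_ι_apply]
  have hrel : ∀ ⦃x y⦄, KPRel Λ R hΛ x y → f x = f y := by
    intro x y h
    induction h with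
    | tv v => rw [fs, ft, htv]
    | idem v => rw [map_mul, fs, ← Unitization.inr_mul, h1a]
    | orth v w h => rw [map_mul, fs, fs, ← Unitization.inr_mul, h1b v w h,
        Unitization.inr_zero, map_zero]
    | mulS p q h => rw [map_mul, fs, fs, fs, ← Unitization.inr_mul, (h2 p q h).1]
    | mulT p q h => rw [map_mul, ft, ft, ft, ← Unitization.inr_mul, (h2 p q h).2]
    | kp3 p q =>
        have e : T p * S q = ∑ x ∈ (hΛ p q).toFinset, S x.1 * T x.2 :=
          (h3 p q).trans (finsum_mem_eq_finite_toFinset_sum _ (hΛ p q))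
        rw [map_mul, ft, fs, ← Unitization.inr_mul, e, map_sum]
        refine (map_sum (Unitization.inrNonUnitalAlgHom R A) _ _).trans ?_
        refine Finset.sum_congr rfl fun x _ => ?_
        have hx : f (kps Λ R x.1 * kpt Λ R x.2) =
            (S x.1 : Unitization R A) * (T x.2 : Unitization R A) := by
          rw [map_mul, fs, ft]
        rw [hx, ← Unitization.inr_mul]
        rfl
    | kp4 v l hl hFE =>
        rw [map_zero, foldl_map_mulHom f, List.map_map, fs]
        have hc : ((f ·) ∘ fun p =>
            kps Λ R (Λ.vertex v) - kps Λ R p * kpt Λ R p) =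
            fun p => ((S (Λ.vertex v) - S p * T p : A) : Unitization R A) := by
          funext p
          simp only [Function.comp_apply, map_sub, map_mul, fs, ft]
          rw [← Unitization.inr_mul]
          exact (map_sub (Unitization.inrNonUnitalAlgHom R A) _ _).symm
        rw [hc]
        have hfold := foldl_map_mulHom (Unitization.inrNonUnitalAlgHom R A)
          (l.map fun p => S (Λ.vertex v) - S p * T p) (S (Λ.vertex v))
        rw [h4 v l hl hFE, map_zero, List.map_map] at hfold
        simp only [Function.comp_def, (fun a => rfl : ∀ a : A,
          Unitization.inrNonUnitalAlgHom R A a = (a : Unitization R A))] at hfold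
        exact hfold.symm
  set Qf : KPQ Λ R hΛ →ₐ[R] Unitization R A :=
    (RingQuot.liftAlgHom R) ⟨f, hrel⟩ with hQf
  have hQs : ∀ p, Qf (kpsQ Λ R hΛ p) = (S p : Unitization R A) := fun p => by
    rw [hQf, kpsQ, kpmk, RingQuot.liftAlgHom_mkAlgHom_apply, fs]
  have hQt : ∀ p, Qf (kptQ Λ R hΛ p) = (T p : Unitization R A) := fun p => by
    rw [hQf, kptQ, kpmk, RingQuot.liftAlgHom_mkAlgHom_apply, ft]
  have hfst : ∀ x ∈ KPB Λ R hΛ, (Qf x).fst = 0 := by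
    intro x hx
    refine NonUnitalAlgebra.adjoin_induction
      (p := fun x _ => (Qf x).fst = 0) ?_ ?_ ?_ ?_ ?_ hx
    · rintro x (⟨p, rfl⟩ | ⟨p, rfl⟩)
      · show (Qf (kpsQ Λ R hΛ p)).fst = 0
        rw [hQs]; exact Unitization.fst_inr R _
      · show (Qf (kptQ Λ R hΛ p)).fst = 0
        rw [hQt]; exact Unitization.fst_inr R _
    · intro x y _ _ hx hy
      show (Qf (x + y)).fst = 0
      rw [map_add, Unitization.fst_add, hx, hy, add_zero]
    · show (Qf 0).fst = 0
      rw [map_zero, Unitization.fst_zero]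
    · intro x y _ _ hx hy
      show (Qf (x * y)).fst = 0
      rw [map_mul, Unitization.fst_mul, hx, zero_mul]
    · intro r x _ hx
      show (Qf (r • x)).fst = 0
      rw [map_smul, Unitization.fst_smul, hx, smul_zero]
  set π : KPB Λ R hΛ →ₙₐ[R] A :=
    { toFun := fun b => (Qf ↑b).snd
      map_smul' := fun r b => by
        simp only [SetLike.val_smul, map_smul, Unitization.snd_smul]; rfl
      map_zero' := by simp only [ZeroMemClass.coe_zero, map_zero, Unitization.snd_zero]
      map_add' := fun a b => by
        simp only [AddMemClass.coe_add, map_add, Unitization.snd_add]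
      map_mul' := fun a b => by
        simp only [MulMemClass.coe_mul, map_mul, Unitization.snd_mul,
          hfst ↑a a.2, hfst ↑b b.2, zero_smul, add_zero, zero_add] } with hπ
  have hπs : ∀ p, π (kpsB Λ R hΛ p) = S p := fun p => by
    show (Qf (kpsQ Λ R hΛ p)).snd = S p
    rw [hQs]; exact Unitization.snd_inr R _
  have hπt : ∀ p, π (kptB Λ R hΛ p) = T p := fun p => by
    show (Qf (kptQ Λ R hΛ p)).snd = T p
    rw [hQt]; exact Unitization.snd_inr R _
  refine ⟨π, ⟨hπs, hπt⟩, ?_⟩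
  rintro π' ⟨hπ's, hπ't⟩
  refine DFunLike.ext _ _ fun b => ?_
  have hb : b ∈ NonUnitalAlgebra.adjoin R
      (Set.range (kpsB Λ R hΛ) ∪ Set.range (kptB Λ R hΛ)) := by
    rw [kpB_adjoin_top]; trivial
  refine NonUnitalAlgebra.adjoin_induction
    (p := fun x _ => π' x = π x) ?_ ?_ ?_ ?_ ?_ hb
  · rintro x (⟨p, rfl⟩ | ⟨p, rfl⟩)
    · show π' (kpsB Λ R hΛ p) = π (kpsB Λ R hΛ p)
      rw [hπ's, hπs]
    · show π' (kptB Λ R hΛ p) = π (kptB Λ R hΛ p)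
      rw [hπ't, hπt]
  · intro x y _ _ hx hy
    show π' (x + y) = π (x + y)
    rw [map_add, map_add, hx, hy]
  · show π' 0 = π 0
    rw [map_zero, map_zero]
  · intro x y _ _ hx hy
    show π' (x * y) = π (x * y)
    rw [map_mul, map_mul, hx, hy]
  · intro r x _ hx
    show π' (r • x) = π (r • x)
    rw [map_smul, map_smul, hx]
end

section
/- Let k be a positive integer, Λ a finitely aligned k-graph, R a commutative ring with 1, and let KP_R(Λ) with Kumjian-Pask Λ-family {s_λ, s_{μ*}} be the universal Kumjian-Pask algebra of Λ over R. Then the R-submodules KP_R(Λ)_n := span_R{s_λ s_{μ*} : λ, μ ∈ Λ, d(λ) − d(μ) = n}, for n ∈ ℤ^k, form a ℤ^k-grading of KP_R(Λ): KP_R(Λ) = ⊕_{n ∈ ℤ^k} KP_R(Λ)_n and KP_R(Λ)_n · KP_R(Λ)_m ⊆ KP_R(Λ)_{n+m} for all n, m ∈ ℤ^k. -/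
/-- The degree-`n` component `KP_R(Λ)_n = span_R{s_p t_q : d(p) - d(q) = n}`. -/
def kpComponent {k : ℕ} (Λ : KGraph k) (R : Type) [CommRing R] {B : Type}
    [NonUnitalRing B] [Module R B] (s t : Λ.Path → B) (n : Fin k → ℤ) :
    Submodule R B :=
  Submodule.span R {b | ∃ p q : Λ.Path,
    (fun i => (Λ.deg p i : ℤ) - (Λ.deg q i : ℤ)) = n ∧ b = s p * t q}

namespace KPAux
open KGraph Multiplicative

variable {k : ℕ} {Λ : KGraph k} {R : Type} [CommRing R]
  {B : Type} [NonUnitalRing B] [Module R B] [SMulCommClass R B B] [IsScalarTower R B B]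
  {s t : Λ.Path → B}

theorem sp_tv (hf : Λ.IsKPFamily s t) (p : Λ.Path) :
    s p * t (Λ.vertex (Λ.src p)) = s p := by
  rw [hf.1]
  have h := (hf.2.2.1 p (Λ.vertex (Λ.src p)) (Λ.rng_vertex _).symm).1
  rw [h, Λ.comp_vertex]

theorem sv_tq (hf : Λ.IsKPFamily s t) (q : Λ.Path) :
    s (Λ.vertex (Λ.src q)) * t q = t q := by
  rw [← hf.1]
  have h := (hf.2.2.1 q (Λ.vertex (Λ.src q)) (Λ.rng_vertex _).symm).2
  rw [h, Λ.comp_vertex]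

theorem sp_tq_zero (hf : Λ.IsKPFamily s t) {p q : Λ.Path} (h : Λ.src p ≠ Λ.src q) :
    s p * t q = 0 := by
  have h1 := sp_tv hf p
  have h2 := sv_tq hf q
  calc s p * t q = (s p * t (Λ.vertex (Λ.src p))) * (s (Λ.vertex (Λ.src q)) * t q) := by
        rw [h1, h2]
    _ = s p * ((t (Λ.vertex (Λ.src p)) * s (Λ.vertex (Λ.src q))) * t q) := by
        rw [mul_assoc, ← mul_assoc (t (Λ.vertex (Λ.src p)))]
    _ = 0 := by rw [hf.1, hf.2.1.2 _ _ h, zero_mul, mul_zero]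

theorem minPairs_deg {p q : Λ.Path} {x : Λ.Path × Λ.Path} (hx : x ∈ Λ.minPairs p q)
    (i : Fin k) : Λ.deg p i + Λ.deg x.1 i = Λ.deg q i + Λ.deg x.2 i := by
  obtain ⟨h1, h2, h3, _⟩ := hx
  have := congrFun ((Λ.deg_comp p x.1 h1).symm.trans
    ((congrArg Λ.deg h3).trans (Λ.deg_comp q x.2 h2))) i
  simpa using this

theorem gen_mul_gen (hf : Λ.IsKPFamily s t) (hΛ : Λ.FinitelyAligned)
    (p q a b : Λ.Path) (n m : Fin k → ℤ)
    (hn : (fun i => (Λ.deg p i : ℤ) - (Λ.deg q i : ℤ)) = n)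
    (hm : (fun i => (Λ.deg a i : ℤ) - (Λ.deg b i : ℤ)) = m) :
    (s p * t q) * (s a * t b) ∈ kpComponent Λ R s t (n + m) := by
  by_cases h1 : Λ.src p = Λ.src q
  · by_cases h2 : Λ.src a = Λ.src b
    · have key : (s p * t q) * (s a * t b) = s p * (t q * s a) * t b := by
        rw [mul_assoc (s p), ← mul_assoc (t q), ← mul_assoc]
      rw [key, hf.2.2.2.1 q a, finsum_mem_eq_finite_toFinset_sum _ (hΛ q a),
        Finset.mul_sum, Finset.sum_mul]
      refine Submodule.sum_mem _ fun x hx => ?_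
      rw [Set.Finite.mem_toFinset] at hx
      obtain ⟨h3, h4, h5, h6⟩ := hx
      have e1 : s p * s x.1 = s (Λ.comp p x.1) := (hf.2.2.1 p x.1 (h1.trans h3)).1
      have e2 : t x.2 * t b = t (Λ.comp b x.2) := (hf.2.2.1 b x.2 (h2.symm.trans h4)).2
      have e3 : s p * (s x.1 * t x.2) * t b = s (Λ.comp p x.1) * t (Λ.comp b x.2) := by
        rw [← mul_assoc (s p), e1, mul_assoc, e2]
      rw [e3]
      refine Submodule.subset_span ⟨_, _, ?_, rfl⟩
      funext i
      have hd := minPairs_deg (⟨h3, h4, h5, h6⟩ : x ∈ Λ.minPairs q a) i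
      have d1 := congrFun (Λ.deg_comp p x.1 (h1.trans h3)) i
      have d2 := congrFun (Λ.deg_comp b x.2 (h2.symm.trans h4)) i
      simp only [Pi.add_apply] at d1 d2
      have hni := congrFun hn i
      have hmi := congrFun hm i
      simp only [Pi.add_apply, ← hni, ← hmi, d1, d2]
      push_cast
      omega
    · rw [sp_tq_zero hf h2, mul_zero]; exact zero_mem _
  · rw [sp_tq_zero hf h1, zero_mul]; exact zero_mem _

theorem comp_mul (hf : Λ.IsKPFamily s t) (hΛ : Λ.FinitelyAligned)
    (n m : Fin k → ℤ) {x y : B}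
    (hx : x ∈ kpComponent Λ R s t n) (hy : y ∈ kpComponent Λ R s t m) :
    x * y ∈ kpComponent Λ R s t (n + m) := by
  induction hx using Submodule.span_induction with
  | mem u hu =>
    induction hy using Submodule.span_induction with
    | mem v hv =>
      obtain ⟨p, q, hn, rfl⟩ := hu
      obtain ⟨a, b, hm, rfl⟩ := hv
      exact gen_mul_gen hf hΛ p q a b n m hn hm
    | zero => rw [mul_zero]; exact zero_mem _
    | add v w _ _ ihv ihw => rw [mul_add]; exact add_mem ihv ihw
    | smul r v _ ihv => rw [mul_smul_comm]; exact Submodule.smul_mem _ _ ihv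
  | zero => rw [zero_mul]; exact zero_mem _
  | add u v _ _ ihu ihv => rw [add_mul]; exact add_mem ihu ihv
  | smul r u _ ihu => rw [smul_mul_assoc]; exact Submodule.smul_mem _ _ ihu

theorem s_mem_iSup (hf : Λ.IsKPFamily s t) (p : Λ.Path) :
    s p ∈ ⨆ n : Fin k → ℤ, kpComponent Λ R s t n :=
  Submodule.mem_iSup_of_mem (fun i => (Λ.deg p i : ℤ) - (Λ.deg (Λ.vertex (Λ.src p)) i : ℤ))
    (Submodule.subset_span ⟨p, Λ.vertex (Λ.src p), rfl, (sp_tv hf p).symm⟩)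

theorem t_mem_iSup (hf : Λ.IsKPFamily s t) (q : Λ.Path) :
    t q ∈ ⨆ n : Fin k → ℤ, kpComponent Λ R s t n :=
  Submodule.mem_iSup_of_mem (fun i => (Λ.deg (Λ.vertex (Λ.src q)) i : ℤ) - (Λ.deg q i : ℤ))
    (Submodule.subset_span ⟨Λ.vertex (Λ.src q), q, rfl, (sv_tq hf q).symm⟩)

theorem iSup_comp_eq_top (hf : Λ.IsKPFamily s t) (hΛ : Λ.FinitelyAligned)
    (hgen : NonUnitalAlgebra.adjoin R (Set.range s ∪ Set.range t) = ⊤) :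
    (⨆ n : Fin k → ℤ, kpComponent Λ R s t n) = ⊤ := by
  set N := ⨆ n : Fin k → ℤ, kpComponent Λ R s t n with hN
  have hmul : ∀ x y : B, x ∈ N → y ∈ N → x * y ∈ N := by
    intro x y hx hy
    refine Submodule.iSup_induction _ (motive := fun x => x * y ∈ N) hx ?_ ?_ ?_
    · intro n u hun
      refine Submodule.iSup_induction _ (motive := fun y => u * y ∈ N) hy ?_ ?_ ?_
      · intro m v hvm
        exact Submodule.mem_iSup_of_mem (n + m) (comp_mul hf hΛ n m hun hvm)
      · show u * 0 ∈ N; rw [mul_zero]; exact zero_mem _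
      · intro a b ha hb; show u * (a + b) ∈ N; rw [mul_add]; exact add_mem ha hb
    · show (0:B) * y ∈ N; rw [zero_mul]; exact zero_mem _
    · intro a b ha hb; show (a + b) * y ∈ N; rw [add_mul]; exact add_mem ha hb
  have hle : NonUnitalAlgebra.adjoin R (Set.range s ∪ Set.range t)
      ≤ N.toNonUnitalSubalgebra hmul := by
    refine NonUnitalAlgebra.adjoin_le ?_
    rintro x (⟨p, rfl⟩ | ⟨p, rfl⟩)
    · exact s_mem_iSup hf p
    · exact t_mem_iSup hf p
  rw [hgen] at hle
  exact eq_top_iff.mpr fun x _ => hle trivial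

end KPAux

namespace KPAux
open KGraph Multiplicative

variable {k : ℕ} {Λ : KGraph k} {R : Type} [CommRing R]
  {B : Type} [NonUnitalRing B] [Module R B] [SMulCommClass R B B] [IsScalarTower R B B]
  {s t : Λ.Path → B}

/-- The ambient graded algebra. -/
abbrev GA (R B : Type) [CommRing R] [NonUnitalRing B] [Module R B]
    [SMulCommClass R B B] [IsScalarTower R B B] (k : ℕ) : Type :=
  MonoidAlgebra (Unitization R B) (Multiplicative (Fin k → ℤ))

theorem single_ofAdd_mul (a b : Fin k → ℤ) (x y : Unitization R B) :
    (MonoidAlgebra.single (ofAdd a) x : GA R B k) * MonoidAlgebra.single (ofAdd b) y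
      = MonoidAlgebra.single (ofAdd (a + b)) (x * y) := by
  rw [MonoidAlgebra.single_mul_single, ← ofAdd_add]

theorem key4 (x : B) (L : List B) :
    ((L.map fun y => (MonoidAlgebra.single (ofAdd (0 : Fin k → ℤ))
        (Unitization.inr y : Unitization R B) : GA R B k)).foldl (· * ·)
        (MonoidAlgebra.single (ofAdd (0 : Fin k → ℤ)) (Unitization.inr x : Unitization R B)))
      = MonoidAlgebra.single (ofAdd (0 : Fin k → ℤ))
          (Unitization.inr (L.foldl (· * ·) x) : Unitization R B) := by
  induction L generalizing x with
  | nil => rfl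
  | cons y L ih =>
    simp only [List.map_cons, List.foldl_cons, single_ofAdd_mul, add_zero,
      ← Unitization.inr_mul]
    exact ih (x * y)


theorem inr_sum {ι : Type*} (F : Finset ι) (f : ι → B) :
    (Unitization.inr (∑ i ∈ F, f i) : Unitization R B) = ∑ i ∈ F, Unitization.inr (f i) :=
  map_sum (Unitization.inrNonUnitalAlgHom R B) _ _

theorem single_sum' {ι : Type*} (g : Multiplicative (Fin k → ℤ)) (F : Finset ι)
    (f : ι → Unitization R B) :
    (MonoidAlgebra.single g (∑ i ∈ F, f i) : GA R B k) = ∑ i ∈ F, MonoidAlgebra.single g (f i) :=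
  map_sum (MonoidAlgebra.singleAddHom g) _ _

/-- The Kumjian–Pask family in the graded algebra. -/
theorem family_GA (hf : Λ.IsKPFamily s t) (hΛ : Λ.FinitelyAligned) :
    Λ.IsKPFamily
      (A := GA R B k)
      (fun p => MonoidAlgebra.single (ofAdd fun i => (Λ.deg p i : ℤ))
        (Unitization.inr (s p) : Unitization R B))
      (fun p => MonoidAlgebra.single (ofAdd fun i => -(Λ.deg p i : ℤ))
        (Unitization.inr (t p) : Unitization R B)) := by
  have hzv : ∀ v : Λ.Obj, (fun i => (Λ.deg (Λ.vertex v) i : ℤ)) = (0 : Fin k → ℤ) := by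
    intro v; funext i; simp [Λ.deg_vertex]
  have hzv' : ∀ v : Λ.Obj, (fun i => -(Λ.deg (Λ.vertex v) i : ℤ)) = (0 : Fin k → ℤ) := by
    intro v; funext i; simp [Λ.deg_vertex]
  refine ⟨?_, ⟨?_, ?_⟩, ?_, ?_, ?_⟩
  · intro v; dsimp only; rw [hf.1, hzv, hzv']
  · intro v; dsimp only
    rw [hzv, single_ofAdd_mul, add_zero, ← Unitization.inr_mul, hf.2.1.1 v]
  · intro v w hvw; dsimp only
    rw [hzv, hzv, single_ofAdd_mul, ← Unitization.inr_mul, hf.2.1.2 v w hvw]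
    simp
  · intro p q hpq
    constructor
    · dsimp only
      rw [single_ofAdd_mul, ← Unitization.inr_mul, (hf.2.2.1 p q hpq).1]
      congr 1
      exact congrArg ofAdd (funext fun i => by
        have := congrFun (Λ.deg_comp p q hpq) i
        simp only [Pi.add_apply] at this
        simp [this])
    · dsimp only
      rw [single_ofAdd_mul, ← Unitization.inr_mul, (hf.2.2.1 p q hpq).2]
      congr 1
      exact congrArg ofAdd (funext fun i => by
        have := congrFun (Λ.deg_comp p q hpq) i
        simp only [Pi.add_apply] at this
        simp only [Pi.add_apply, this]
        push_cast; ring)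
  · intro p q; dsimp only
    rw [single_ofAdd_mul, ← Unitization.inr_mul, hf.2.2.2.1 p q,
      finsum_mem_eq_finite_toFinset_sum _ (hΛ p q),
      finsum_mem_eq_finite_toFinset_sum _ (hΛ p q),
      inr_sum, single_sum']
    refine Finset.sum_congr rfl fun x hx => ?_
    rw [Set.Finite.mem_toFinset] at hx
    rw [single_ofAdd_mul]
    rw [← Unitization.inr_mul]
    congr 1
    exact congrArg ofAdd (funext fun i => by
      have := minPairs_deg hx i
      simp only [Pi.add_apply]
      omega)
  · intro v l hnd hfe; dsimp only
    have hmap : (l.map fun p =>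
        (MonoidAlgebra.single (ofAdd fun i => (Λ.deg (Λ.vertex v) i : ℤ))
          (Unitization.inr (s (Λ.vertex v)) : Unitization R B) : GA R B k) -
          MonoidAlgebra.single (ofAdd fun i => (Λ.deg p i : ℤ))
            (Unitization.inr (s p) : Unitization R B) *
          MonoidAlgebra.single (ofAdd fun i => -(Λ.deg p i : ℤ))
            (Unitization.inr (t p) : Unitization R B))
        = (l.map fun p => s (Λ.vertex v) - s p * t p).map
            fun y => (MonoidAlgebra.single (ofAdd (0 : Fin k → ℤ))
              (Unitization.inr y : Unitization R B) : GA R B k) := by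
      rw [List.map_map]
      refine List.map_congr_left fun p _ => ?_
      dsimp only [Function.comp]
      rw [single_ofAdd_mul, ← Unitization.inr_mul, hzv]
      have hz : (fun i => (Λ.deg p i : ℤ)) + (fun i => -(Λ.deg p i : ℤ)) = (0 : Fin k → ℤ) := by
        funext i; simp
      rw [hz]
      have hs : Unitization.inr (s (Λ.vertex v) - s p * t p)
          = (Unitization.inr (s (Λ.vertex v)) : Unitization R B) - Unitization.inr (s p * t p) :=
        map_sub (Unitization.inrNonUnitalAlgHom R B) _ _
      rw [hs]
      exact (MonoidAlgebra.single_sub _ _ _).symm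
    rw [hmap, hzv, key4, hf.2.2.2.2 v l hnd hfe]
    simp

theorem GA_smul_single (r : R) (g : Multiplicative (Fin k → ℤ)) (x : Unitization R B) :
    r • (MonoidAlgebra.single g x : GA R B k) = MonoidAlgebra.single g (r • x) :=
  MonoidAlgebra.smul_single r g x

theorem pi_comp (hf : Λ.IsKPFamily s t) (hΛ : Λ.FinitelyAligned)
    (π : B →ₙₐ[R] GA R B k)
    (hπs : ∀ p, π (s p) = MonoidAlgebra.single (ofAdd fun i => (Λ.deg p i : ℤ))
      (Unitization.inr (s p) : Unitization R B))
    (hπt : ∀ p, π (t p) = MonoidAlgebra.single (ofAdd fun i => -(Λ.deg p i : ℤ))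
      (Unitization.inr (t p) : Unitization R B))
    (n : Fin k → ℤ) {x : B} (hx : x ∈ kpComponent Λ R s t n) :
    π x = MonoidAlgebra.single (ofAdd n) (Unitization.inr x : Unitization R B) := by
  induction hx using Submodule.span_induction with
  | mem u hu =>
    obtain ⟨p, q, hn, rfl⟩ := hu
    rw [map_mul, hπs, hπt, single_ofAdd_mul, ← Unitization.inr_mul]
    have he : (fun i => (Λ.deg p i : ℤ)) + (fun i => -(Λ.deg q i : ℤ)) = n := by
      funext i
      have := congrFun hn i
      simp only [Pi.add_apply]
      omega
    rw [he]
  | zero => simp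
  | add x y _ _ ihx ihy =>
    rw [map_add, ihx, ihy, Unitization.inr_add, MonoidAlgebra.single_add]
  | smul r x _ ih =>
    rw [map_smul, ih, Unitization.inr_smul, GA_smul_single]

theorem components_unique (hf : Λ.IsKPFamily s t) (hΛ : Λ.FinitelyAligned)
    (hU : Λ.IsUniversalKP R B s t) (b : B)
    (c c' : (Fin k → ℤ) →₀ B)
    (hc1 : ∀ n, c n ∈ kpComponent Λ R s t n) (hc2 : (c.sum fun _ x => x) = b)
    (hc1' : ∀ n, c' n ∈ kpComponent Λ R s t n) (hc2' : (c'.sum fun _ x => x) = b) :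
    c = c' := by
  obtain ⟨π, ⟨hπs, hπt⟩, -⟩ := hU.2.2 (GA R B k) _ _ (family_GA hf hΛ)
  have key : ∀ (d : (Fin k → ℤ) →₀ B), (∀ n, d n ∈ kpComponent Λ R s t n) →
      ∀ m : Fin k → ℤ, (π (d.sum fun _ x => x)).coeff (ofAdd m) = Unitization.inr (d m) := by
    intro d hd m
    rw [Finsupp.sum, map_sum]
    have : ∀ nn ∈ d.support, π (d nn)
        = MonoidAlgebra.single (ofAdd nn) (Unitization.inr (d nn) : Unitization R B) :=
      fun nn _ => pi_comp hf hΛ π hπs hπt nn (hd nn)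
    rw [Finset.sum_congr rfl this, MonoidAlgebra.coeff_sum, Finsupp.finset_sum_apply]
    classical
    have : ∀ nn ∈ d.support,
        (MonoidAlgebra.single (ofAdd nn) (Unitization.inr (d nn) : Unitization R B)).coeff (ofAdd m)
          = if nn = m then Unitization.inr (d nn) else 0 := by
      intro nn _
      simp only [MonoidAlgebra.coeff_single, Finsupp.single_apply, EmbeddingLike.apply_eq_iff_eq]
    rw [Finset.sum_congr rfl this, Finset.sum_ite_eq' d.support m
      (fun nn => (Unitization.inr (d nn) : Unitization R B))]
    split_ifs with hm
    · rfl
    · rw [Finsupp.notMem_support_iff.mp hm]; simp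
  ext m
  have h1 := key c hc1 m
  have h2 := key c' hc1' m
  rw [hc2] at h1; rw [hc2'] at h2
  exact Unitization.inr_injective (h1.symm.trans h2)

end KPAux

/-- the components `KP_R(Λ)_n` form a `ℤᵏ`-grading of `KP_R(Λ)`:
every element has a unique decomposition into homogeneous components, and the
components multiply into the correct component. -/
theorem universal_kp_graded {k : ℕ} (hk : 0 < k) (Λ : KGraph k)
    (hΛ : Λ.FinitelyAligned) (R : Type) [CommRing R]
    (B : Type) [NonUnitalRing B] [Module R B] [SMulCommClass R B B]
    [IsScalarTower R B B] (s t : Λ.Path → B)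
    (hU : Λ.IsUniversalKP R B s t) :
    (∀ b : B, ∃! c : (Fin k → ℤ) →₀ B,
      (∀ n, c n ∈ kpComponent Λ R s t n) ∧ (c.sum fun _ x => x) = b) ∧
    ∀ (n m : Fin k → ℤ) (a b : B), a ∈ kpComponent Λ R s t n →
      b ∈ kpComponent Λ R s t m → a * b ∈ kpComponent Λ R s t (n + m) := by
  have hf := hU.1
  constructor
  · intro b
    have hb : b ∈ ⨆ n : Fin k → ℤ, kpComponent Λ R s t n := by
      rw [KPAux.iSup_comp_eq_top hf hΛ hU.2.1]; trivial
    obtain ⟨c, hc1, hc2⟩ := (Submodule.mem_iSup_iff_exists_finsupp _ b).mp hb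
    exact ⟨c, ⟨hc1, hc2⟩, fun c' hc' =>
      KPAux.components_unique hf hΛ hU b c' c hc'.1 hc'.2 hc1 hc2⟩
  · intro n m a b ha hb
    exact KPAux.comp_mul hf hΛ n m ha hb
end

section
/- (Graded uniqueness theorem) Let k be a positive integer, Λ a finitely aligned k-graph, R a commutative ring with 1, and let KP_R(Λ) with Kumjian-Pask Λ-family {s_λ, s_{μ*}} be the universal Kumjian-Pask algebra of Λ over R, graded over ℤ^k by KP_R(Λ)_n := span_R{s_λ s_{μ*} : d(λ) − d(μ) = n}. Let A be a ℤ^k-graded R-algebra and suppose π : KP_R(Λ) → A is a ℤ^k-graded R-algebra homomorphism such that π(r s_v) ≠ 0 for all r ∈ R\{0} and all v ∈ Λ^0. Then π is injective. -/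
namespace GU
open KGraph

variable {k : ℕ} {Λ : KGraph k}

/-- `τ` extends `μ`: `τ = μσ` for some `σ`. -/
def Ext (Λ : KGraph k) (μ τ : Λ.Path) : Prop :=
  ∃ σ, Λ.src μ = Λ.rng σ ∧ Λ.comp μ σ = τ

lemma Ext.refl (μ : Λ.Path) : Ext Λ μ μ :=
  ⟨Λ.vertex (Λ.src μ), (Λ.rng_vertex _).symm, Λ.comp_vertex μ⟩

lemma Ext.rng {μ τ : Λ.Path} (h : Ext Λ μ τ) : Λ.rng τ = Λ.rng μ := by
  obtain ⟨σ, h1, h2⟩ := h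
  rw [← h2, Λ.rng_comp _ _ h1]

lemma Ext.deg_le {μ τ : Λ.Path} (h : Ext Λ μ τ) : Λ.deg μ ≤ Λ.deg τ := by
  obtain ⟨σ, h1, h2⟩ := h
  rw [← h2, Λ.deg_comp _ _ h1]
  exact le_add_of_nonneg_right (by positivity)

lemma Ext.trans {μ τ ρ : Λ.Path} (h : Ext Λ μ τ) (h' : Ext Λ τ ρ) : Ext Λ μ ρ := by
  obtain ⟨σ, h1, h2⟩ := h
  obtain ⟨σ', h1', h2'⟩ := h'
  subst h2'
  refine ⟨Λ.comp σ σ', ?_, ?_⟩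
  · rw [Λ.rng_comp _ _ ]
    · exact h1
    · rw [← h2] at h1'; rwa [Λ.src_comp _ _ h1] at h1'
  · rw [← Λ.comp_assoc _ _ _ h1, h2]
    rw [← h2] at h1'; rwa [Λ.src_comp _ _ h1] at h1'

/-- a degree-zero path is a vertex. -/
lemma eq_vertex_of_deg_zero {p : Λ.Path} (h : Λ.deg p = 0) : p = Λ.vertex (Λ.rng p) := by
  have hfac := Λ.factorisation p 0 0 (by rw [h]; simp)
  have h1 : (⟨Λ.vertex (Λ.rng p), p⟩ : Λ.Path × Λ.Path) ∈
      {x : Λ.Path × Λ.Path | Λ.src x.1 = Λ.rng x.2 ∧ Λ.deg x.1 = 0 ∧ Λ.deg x.2 = 0 ∧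
        Λ.comp x.1 x.2 = p} := by
    refine ⟨by rw [Λ.src_vertex], Λ.deg_vertex _, h, Λ.vertex_comp p⟩
  have h2 : (⟨p, Λ.vertex (Λ.src p)⟩ : Λ.Path × Λ.Path) ∈
      {x : Λ.Path × Λ.Path | Λ.src x.1 = Λ.rng x.2 ∧ Λ.deg x.1 = 0 ∧ Λ.deg x.2 = 0 ∧
        Λ.comp x.1 x.2 = p} := by
    refine ⟨by rw [Λ.rng_vertex], h, Λ.deg_vertex _, Λ.comp_vertex p⟩
  obtain ⟨x, hx, hun⟩ := hfac
  have e1 := hun _ h1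
  have e2 := hun _ h2
  have := e1.trans e2.symm
  exact congrArg Prod.fst this |>.symm

/-- cancellation: factorisations with equal degrees agree. -/
lemma cancel {μ σ σ' : Λ.Path} (h : Λ.src μ = Λ.rng σ) (h' : Λ.src μ = Λ.rng σ')
    (hdeg : Λ.deg σ = Λ.deg σ') (hc : Λ.comp μ σ = Λ.comp μ σ') : σ = σ' := by
  have hfac := Λ.factorisation (Λ.comp μ σ) (Λ.deg μ) (Λ.deg σ) (Λ.deg_comp _ _ h)
  obtain ⟨x, hx, hun⟩ := hfac
  have e1 := hun ⟨μ, σ⟩ ⟨h, rfl, rfl, rfl⟩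
  have e2 := hun ⟨μ, σ'⟩ ⟨h', rfl, hdeg.symm, hc.symm⟩
  have := e1.trans e2.symm
  exact congrArg Prod.snd this

lemma Ext.antisymm_deg {μ τ : Λ.Path} (h : Ext Λ μ τ) (hd : Λ.deg τ = Λ.deg μ) :
    τ = μ := by
  obtain ⟨σ, h1, h2⟩ := h
  have hσ : Λ.deg σ = 0 := by
    have := Λ.deg_comp μ σ h1
    rw [h2, hd] at this
    funext i
    have h4 := congrFun this i
    simp only [Pi.add_apply] at h4
    simp only [Pi.zero_apply]
    omega
  rw [← h2, eq_vertex_of_deg_zero hσ, ← h1, Λ.comp_vertex]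

lemma Ext.ne_deg {μ τ : Λ.Path} (h : Ext Λ μ τ) (hne : τ ≠ μ) : Λ.deg μ ≠ Λ.deg τ :=
  fun hd => hne (h.antisymm_deg hd.symm)

/-- unique lift: if `Ext μ τ` there is a unique `g` with `comp μ g = τ`. -/
lemma lift_unique {μ τ : Λ.Path} (g g' : Λ.Path) (hg : Λ.src μ = Λ.rng g)
    (hg' : Λ.src μ = Λ.rng g') (h : Λ.comp μ g = τ) (h' : Λ.comp μ g' = τ) : g = g' := by
  have hd : Λ.deg g = Λ.deg g' := by
    have d1 := Λ.deg_comp μ g hg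
    have d2 := Λ.deg_comp μ g' hg'
    rw [h] at d1; rw [h'] at d2
    funext i
    have := congrFun (d1.symm.trans d2) i
    simpa using this
  exact cancel hg hg' hd (h.trans h'.symm)

end GU
namespace GU

variable {k : ℕ} {Λ : KGraph k}

lemma deg_le_of_comp {μ g lam : Λ.Path} (hg1 : Λ.src μ = Λ.rng g)
    (hg2 : Λ.comp μ g = lam) : Λ.deg μ ≤ Λ.deg lam := by
  rw [← hg2, Λ.deg_comp _ _ hg1]
  exact le_add_of_nonneg_right (by positivity)

lemma comp_vertex_src (p : Λ.Path) (w : Λ.Obj) (h : Λ.src p = w) :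
    Λ.comp p (Λ.vertex w) = p := by subst h; exact Λ.comp_vertex p

lemma minPairs_self (p : Λ.Path) :
    Λ.minPairs p p = {(Λ.vertex (Λ.src p), Λ.vertex (Λ.src p))} := by
  ext x
  simp only [KGraph.minPairs, Set.mem_setOf_eq, Set.mem_singleton_iff]
  constructor
  · rintro ⟨h1, h2, h3, h4⟩
    rw [Λ.deg_comp _ _ h1, sup_idem] at h4
    have hx1 : Λ.deg x.1 = 0 := by
      funext i; have := congrFun h4 i
      simp only [Pi.add_apply] at this
      simp only [Pi.zero_apply]; omega
    have e1 : x.1 = Λ.vertex (Λ.src p) := by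
      rw [eq_vertex_of_deg_zero hx1, ← h1]
    have hc1 : Λ.comp p x.1 = p := by rw [e1, comp_vertex_src p _ rfl]
    have hx2 : Λ.deg x.2 = 0 := by
      have := Λ.deg_comp p x.2 h2
      rw [← h3, hc1] at this
      funext i; have := congrFun this i
      simp only [Pi.add_apply] at this
      simp only [Pi.zero_apply]; omega
    have e2 : x.2 = Λ.vertex (Λ.src p) := by
      rw [eq_vertex_of_deg_zero hx2, ← h2]
    exact Prod.ext e1 e2
  · rintro rfl
    refine ⟨by rw [Λ.rng_vertex], by rw [Λ.rng_vertex], rfl, ?_⟩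
    rw [comp_vertex_src p _ rfl, sup_idem]

lemma minPairs_empty_of_deg_eq {p q : Λ.Path} (hd : Λ.deg p = Λ.deg q) (hne : p ≠ q) :
    Λ.minPairs p q = ∅ := by
  ext x
  simp only [KGraph.minPairs, Set.mem_setOf_eq, Set.mem_empty_iff_false, iff_false]
  rintro ⟨h1, h2, h3, h4⟩
  rw [Λ.deg_comp _ _ h1, hd, sup_idem] at h4
  have hx1 : Λ.deg x.1 = 0 := by
    funext i; have h5 := congrFun h4 i
    simp only [Pi.add_apply] at h5
    simp only [Pi.zero_apply]; omega
  have hx2 : Λ.deg x.2 = 0 := by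
    have h6 := Λ.deg_comp p x.1 h1
    have h7 := Λ.deg_comp q x.2 h2
    rw [h3] at h6
    rw [h6] at h7
    funext i
    have h8 := congrFun h7 i
    have h9 := congrFun hx1 i
    have h10 := congrFun hd i
    simp only [Pi.add_apply] at h8
    simp only [Pi.zero_apply] at h9 ⊢
    omega
  apply hne
  have e1 : x.1 = Λ.vertex (Λ.src p) := by rw [eq_vertex_of_deg_zero hx1, ← h1]
  have e2 : x.2 = Λ.vertex (Λ.src q) := by rw [eq_vertex_of_deg_zero hx2, ← h2]
  rw [e1, comp_vertex_src p _ rfl, e2, comp_vertex_src q _ rfl] at h3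
  exact h3

lemma minPairs_ext {μ g lam : Λ.Path} (hg1 : Λ.src μ = Λ.rng g)
    (hg2 : Λ.comp μ g = lam) :
    Λ.minPairs lam μ = {(Λ.vertex (Λ.src lam), g)} := by
  have hle : Λ.deg μ ≤ Λ.deg lam := deg_le_of_comp hg1 hg2
  have hdg : Λ.deg lam = Λ.deg μ + Λ.deg g := by rw [← hg2, Λ.deg_comp _ _ hg1]
  ext x
  simp only [KGraph.minPairs, Set.mem_setOf_eq, Set.mem_singleton_iff]
  constructor
  · rintro ⟨h1, h2, h3, h4⟩
    rw [Λ.deg_comp _ _ h1, sup_eq_left.mpr hle] at h4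
    have hx1 : Λ.deg x.1 = 0 := by
      funext i; have := congrFun h4 i
      simp only [Pi.add_apply] at this
      simp only [Pi.zero_apply]; omega
    have e1 : x.1 = Λ.vertex (Λ.src lam) := by rw [eq_vertex_of_deg_zero hx1, ← h1]
    have hc1 : Λ.comp lam x.1 = lam := by rw [e1, comp_vertex_src lam _ rfl]
    rw [hc1] at h3
    have e2 : x.2 = g := lift_unique x.2 g h2 hg1 h3.symm hg2
    exact Prod.ext e1 e2
  · rintro rfl
    refine ⟨by rw [Λ.rng_vertex], hg1, ?_, ?_⟩
    · rw [comp_vertex_src lam _ rfl, hg2]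
    · rw [comp_vertex_src lam _ rfl, sup_eq_left.mpr hle]

lemma minPairs_ext' {μ g lam : Λ.Path} (hg1 : Λ.src μ = Λ.rng g)
    (hg2 : Λ.comp μ g = lam) :
    Λ.minPairs μ lam = {(g, Λ.vertex (Λ.src lam))} := by
  have hle : Λ.deg μ ≤ Λ.deg lam := deg_le_of_comp hg1 hg2
  have hdg : Λ.deg lam = Λ.deg μ + Λ.deg g := by rw [← hg2, Λ.deg_comp _ _ hg1]
  ext x
  simp only [KGraph.minPairs, Set.mem_setOf_eq, Set.mem_singleton_iff]
  constructor
  · rintro ⟨h1, h2, h3, h4⟩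
    rw [Λ.deg_comp _ _ h1, sup_eq_right.mpr hle] at h4
    have hx2 : Λ.deg x.2 = 0 := by
      have h6 := Λ.deg_comp μ x.1 h1
      have h7 := Λ.deg_comp lam x.2 h2
      rw [h3] at h6
      rw [h6] at h7
      funext i
      have h8 := congrFun h7 i
      have h9 := congrFun h4 i
      have h10 := congrFun hdg i
      simp only [Pi.add_apply] at h8 h9 h10
      simp only [Pi.zero_apply]; omega
    have e2 : x.2 = Λ.vertex (Λ.src lam) := by rw [eq_vertex_of_deg_zero hx2, ← h2]
    have hc2 : Λ.comp lam x.2 = lam := by rw [e2, comp_vertex_src lam _ rfl]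
    rw [hc2] at h3
    have e1 : x.1 = g := lift_unique x.1 g h1 hg1 h3 hg2
    exact Prod.ext e1 e2
  · rintro rfl
    refine ⟨hg1, by rw [Λ.rng_vertex], ?_, ?_⟩
    · rw [comp_vertex_src lam _ rfl, hg2]
    · rw [hg2]
      exact (sup_eq_right.mpr hle).symm

lemma minPairs_empty_of_rng_ne {p q : Λ.Path} (h : Λ.rng p ≠ Λ.rng q) :
    Λ.minPairs p q = ∅ := by
  ext x
  simp only [KGraph.minPairs, Set.mem_setOf_eq, Set.mem_empty_iff_false, iff_false]
  rintro ⟨h1, h2, h3, _⟩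
  apply h
  rw [← Λ.rng_comp p x.1 h1, h3, Λ.rng_comp q x.2 h2]

lemma comp_mem_MCE {p q : Λ.Path} {x : Λ.Path × Λ.Path} (hx : x ∈ Λ.minPairs p q) :
    Λ.comp p x.1 ∈ Λ.MCE p q := by
  obtain ⟨h1, h2, h3, h4⟩ := hx
  exact ⟨h4, ⟨x.1, h1, rfl⟩, ⟨x.2, h2, h3.symm⟩⟩

lemma MCE_finite (hΛ : Λ.FinitelyAligned) (p q : Λ.Path) : (Λ.MCE p q).Finite := by
  apply Set.Finite.subset (Set.Finite.image (fun x => Λ.comp p x.1) (hΛ p q))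
  rintro τ ⟨hd, ⟨r, hr1, hr2⟩, ⟨r', hr1', hr2'⟩⟩
  exact ⟨(r, r'), ⟨hr1, hr1', by rw [hr2, hr2'], by rw [hr2, hd]⟩, hr2⟩

lemma minPairs_fst_deg_ne_zero {μ lam : Λ.Path} {x : Λ.Path × Λ.Path}
    (hx : x ∈ Λ.minPairs lam μ) (hne : ¬ Ext Λ μ lam) : Λ.deg x.1 ≠ 0 := by
  intro h0
  obtain ⟨h1, h2, h3, h4⟩ := hx
  apply hne
  have e1 : x.1 = Λ.vertex (Λ.src lam) := by rw [eq_vertex_of_deg_zero h0, ← h1]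
  rw [e1, comp_vertex_src lam _ rfl] at h3
  exact ⟨x.2, h2, h3.symm⟩

lemma minPairs_snd_deg_ne_zero {μ lam : Λ.Path} {x : Λ.Path × Λ.Path}
    (hx : x ∈ Λ.minPairs μ lam) (hne : ¬ Ext Λ μ lam) : Λ.deg x.2 ≠ 0 := by
  intro h0
  obtain ⟨h1, h2, h3, h4⟩ := hx
  apply hne
  have e2 : x.2 = Λ.vertex (Λ.src lam) := by rw [eq_vertex_of_deg_zero h0, ← h2]
  rw [e2, comp_vertex_src lam _ rfl] at h3
  exact ⟨x.1, h1, h3⟩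

end GU
namespace GU

variable {k : ℕ} {Λ : KGraph k} {A : Type} [NonUnitalRing A] {S T : Λ.Path → A}

section family

variable (hfam : Λ.IsKPFamily S T)
include hfam

lemma tv (v : Λ.Obj) : T (Λ.vertex v) = S (Λ.vertex v) := hfam.1 v

lemma vv (v : Λ.Obj) : S (Λ.vertex v) * S (Λ.vertex v) = S (Λ.vertex v) :=
  hfam.2.1.1 v

lemma vw {v w : Λ.Obj} (h : v ≠ w) : S (Λ.vertex v) * S (Λ.vertex w) = 0 :=
  hfam.2.1.2 v w h

lemma ss {p q : Λ.Path} (h : Λ.src p = Λ.rng q) : S p * S q = S (Λ.comp p q) :=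
  (hfam.2.2.1 p q h).1

lemma tt {p q : Λ.Path} (h : Λ.src p = Λ.rng q) : T q * T p = T (Λ.comp p q) :=
  (hfam.2.2.1 p q h).2

lemma kp3 (p q : Λ.Path) : T p * S q = ∑ᶠ x ∈ Λ.minPairs p q, S x.1 * T x.2 :=
  hfam.2.2.2.1 p q

lemma s_mul_v (p : Λ.Path) : S p * S (Λ.vertex (Λ.src p)) = S p := by
  rw [ss hfam (Λ.rng_vertex (Λ.src p)).symm, Λ.comp_vertex]

lemma v_mul_s (p : Λ.Path) : S (Λ.vertex (Λ.rng p)) * S p = S p := by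
  rw [ss hfam (Λ.src_vertex (Λ.rng p)), Λ.vertex_comp]

lemma t_mul_v (p : Λ.Path) : T p * S (Λ.vertex (Λ.rng p)) = T p := by
  rw [← tv hfam, tt hfam (Λ.src_vertex (Λ.rng p)), Λ.vertex_comp]

lemma v_mul_t (p : Λ.Path) : S (Λ.vertex (Λ.src p)) * T p = T p := by
  rw [← tv hfam, tt hfam (Λ.rng_vertex (Λ.src p)).symm, Λ.comp_vertex]

lemma ts_empty {p q : Λ.Path} (h : Λ.minPairs p q = ∅) : T p * S q = 0 := by
  rw [kp3 hfam, h, finsum_mem_empty]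

lemma ts_single {p q : Λ.Path} {a : Λ.Path × Λ.Path} (h : Λ.minPairs p q = {a}) :
    T p * S q = S a.1 * T a.2 := by
  rw [kp3 hfam, h, finsum_mem_singleton]

lemma ts_self (p : Λ.Path) : T p * S p = S (Λ.vertex (Λ.src p)) := by
  rw [ts_single hfam (minPairs_self p), tv hfam, vv hfam]

lemma ts_rng_ne {p q : Λ.Path} (h : Λ.rng p ≠ Λ.rng q) : T p * S q = 0 :=
  ts_empty hfam (minPairs_empty_of_rng_ne h)

lemma ts_deg_eq_ne {p q : Λ.Path} (hd : Λ.deg p = Λ.deg q) (hne : p ≠ q) :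
    T p * S q = 0 :=
  ts_empty hfam (minPairs_empty_of_deg_eq hd hne)

lemma ts_ext {μ g lam : Λ.Path} (hg1 : Λ.src μ = Λ.rng g) (hg2 : Λ.comp μ g = lam) :
    T lam * S μ = T g := by
  rw [ts_single hfam (minPairs_ext hg1 hg2)]
  have hsrc : Λ.src lam = Λ.src g := by rw [← hg2, Λ.src_comp _ _ hg1]
  rw [hsrc, v_mul_t hfam]

lemma st_ext {μ g lam : Λ.Path} (hg1 : Λ.src μ = Λ.rng g) (hg2 : Λ.comp μ g = lam) :
    T μ * S lam = S g := by
  rw [ts_single hfam (minPairs_ext' hg1 hg2)]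
  have hsrc : Λ.src lam = Λ.src g := by rw [← hg2, Λ.src_comp _ _ hg1]
  rw [tv hfam, hsrc, s_mul_v hfam]

lemma v_mul_s_ne {w : Λ.Obj} {a : Λ.Path} (h : w ≠ Λ.rng a) :
    S (Λ.vertex w) * S a = 0 := by
  rw [← v_mul_s hfam a, ← mul_assoc, vw hfam h, zero_mul]

lemma t_mul_v_ne {w : Λ.Obj} {a : Λ.Path} (h : Λ.rng a ≠ w) :
    T a * S (Λ.vertex w) = 0 := by
  rw [← t_mul_v hfam a, mul_assoc, vw hfam h, mul_zero]

lemma s_mul_v_ne {w : Λ.Obj} {a : Λ.Path} (h : Λ.src a ≠ w) :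
    S a * S (Λ.vertex w) = 0 := by
  rw [← s_mul_v hfam a, mul_assoc, vw hfam h, mul_zero]

lemma v_mul_t_ne {w : Λ.Obj} {a : Λ.Path} (h : w ≠ Λ.src a) :
    S (Λ.vertex w) * T a = 0 := by
  rw [← v_mul_t hfam a, ← mul_assoc, vw hfam h, zero_mul]

lemma s_orth {p q : Λ.Path} (h : Λ.src p ≠ Λ.rng q) : S p * S q = 0 := by
  rw [← v_mul_s hfam q, ← mul_assoc, s_mul_v_ne hfam h, zero_mul]

lemma t_orth {p q : Λ.Path} (h : Λ.src p ≠ Λ.rng q) : T q * T p = 0 := by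
  rw [← v_mul_t hfam p, ← mul_assoc, t_mul_v_ne hfam (Ne.symm h), zero_mul]

end family

section familyfin

variable (hΛ : Λ.FinitelyAligned) (hfam : Λ.IsKPFamily S T)
include hΛ hfam

lemma ts_fin (p q : Λ.Path) :
    T p * S q = ∑ x ∈ (hΛ p q).toFinset, S x.1 * T x.2 := by
  rw [kp3 hfam]
  exact finsum_mem_eq_finite_toFinset_sum _ (hΛ p q)

lemma pp_formula (a b : Λ.Path) :
    (S a * T a) * (S b * T b)
      = ∑ x ∈ (hΛ a b).toFinset, S (Λ.comp a x.1) * T (Λ.comp b x.2) := by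
  have : (S a * T a) * (S b * T b) = S a * (T a * S b) * T b := by
    rw [mul_assoc, mul_assoc, mul_assoc]
  rw [this, ts_fin hΛ hfam, Finset.mul_sum, Finset.sum_mul]
  apply Finset.sum_congr rfl
  intro x hx
  rw [Set.Finite.mem_toFinset] at hx
  obtain ⟨h1, h2, h3, h4⟩ := hx
  rw [← mul_assoc, ss hfam h1, mul_assoc, tt hfam h2]

lemma pp_comm (a b : Λ.Path) :
    (S a * T a) * (S b * T b) = (S b * T b) * (S a * T a) := by
  rw [pp_formula hΛ hfam, pp_formula hΛ hfam]
  apply Finset.sum_nbij' (fun x => Prod.swap x) (fun x => Prod.swap x)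
  · intro x hx
    rw [Set.Finite.mem_toFinset] at hx ⊢
    obtain ⟨h1, h2, h3, h4⟩ := hx
    refine ⟨h2, h1, h3.symm, ?_⟩
    simp only [Prod.fst_swap, Prod.snd_swap]
    rw [← h3, h4, sup_comm]
  · intro x hx
    rw [Set.Finite.mem_toFinset] at hx ⊢
    obtain ⟨h1, h2, h3, h4⟩ := hx
    refine ⟨h2, h1, h3.symm, ?_⟩
    simp only [Prod.fst_swap, Prod.snd_swap]
    rw [← h3, h4, sup_comm]
  · intro x _; rfl
  · intro x _; rfl
  · intro x hx
    rw [Set.Finite.mem_toFinset] at hx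
    obtain ⟨h1, h2, h3, h4⟩ := hx
    simp only [Prod.fst_swap, Prod.snd_swap]
    rw [h3]

end familyfin

end GU
set_option linter.unusedSectionVars false

namespace GU

variable {k : ℕ} {Λ : KGraph k} {A : Type} [NonUnitalRing A]

/-- the factor `s_w - p_γ`. -/
def QF (S T : Λ.Path → A) (w : Λ.Obj) (γ : Λ.Path) : A :=
  S (Λ.vertex w) - S γ * T γ

/-- the product `s_w ∏_{γ ∈ l} (s_w - p_γ)`. -/
def QL (S T : Λ.Path → A) (w : Λ.Obj) (l : List Λ.Path) : A :=
  l.foldr (fun γ acc => acc * QF S T w γ) (S (Λ.vertex w))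

lemma ql_nil {S T : Λ.Path → A} {w : Λ.Obj} :
    QL S T w ([] : List Λ.Path) = S (Λ.vertex w) := rfl

lemma ql_cons {S T : Λ.Path → A} {w : Λ.Obj} (γ : Λ.Path) (l : List Λ.Path) :
    QL S T w (γ :: l) = QL S T w l * QF S T w γ := rfl

section qlist

variable {S T : Λ.Path → A} (hΛ : Λ.FinitelyAligned) (hfam : Λ.IsKPFamily S T)
  {w : Λ.Obj}
include hfam

lemma v_mul_p {a : Λ.Path} (h : Λ.rng a = w) :
    S (Λ.vertex w) * (S a * T a) = S a * T a := by
  subst h; rw [← mul_assoc, v_mul_s hfam]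

lemma p_mul_v {a : Λ.Path} (h : Λ.rng a = w) :
    (S a * T a) * S (Λ.vertex w) = S a * T a := by
  subst h; rw [mul_assoc, t_mul_v hfam]

lemma v_mul_qf {γ : Λ.Path} (h : Λ.rng γ = w) :
    S (Λ.vertex w) * QF S T w γ = QF S T w γ := by
  rw [QF, mul_sub, vv hfam, v_mul_p hfam h]

lemma qf_mul_v {γ : Λ.Path} (h : Λ.rng γ = w) :
    QF S T w γ * S (Λ.vertex w) = QF S T w γ := by
  rw [QF, sub_mul, vv hfam, p_mul_v hfam h]

include hΛ in
lemma qf_comm {γ γ' : Λ.Path} (h : Λ.rng γ = w) (h' : Λ.rng γ' = w) :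
    QF S T w γ * QF S T w γ' = QF S T w γ' * QF S T w γ := by
  have hcomm := pp_comm hΛ hfam γ γ'
  simp only [QF, mul_sub, sub_mul, vv hfam, v_mul_p hfam h, v_mul_p hfam h',
    p_mul_v hfam h, p_mul_v hfam h', hcomm]
  abel

lemma v_mul_ql (l : List Λ.Path) : S (Λ.vertex w) * QL S T w l = QL S T w l := by
  induction l with
  | nil => exact vv hfam w
  | cons γ l ih => rw [ql_cons, ← mul_assoc, ih]

lemma ql_mul_v {l : List Λ.Path} (hl : ∀ γ ∈ l, Λ.rng γ = w) :
    QL S T w l * S (Λ.vertex w) = QL S T w l := by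
  induction l with
  | nil => exact vv hfam w
  | cons γ l _ =>
    rw [ql_cons, mul_assoc, qf_mul_v hfam (hl γ (by simp))]

include hΛ in
lemma qf_mul_ql {γ : Λ.Path} {l : List Λ.Path} (hγ : Λ.rng γ = w)
    (hl : ∀ γ' ∈ l, Λ.rng γ' = w) :
    QF S T w γ * QL S T w l = QL S T w l * QF S T w γ := by
  induction l with
  | nil =>
    rw [ql_nil, v_mul_qf hfam hγ, qf_mul_v hfam hγ]
  | cons γ' l ih =>
    rw [ql_cons, ← mul_assoc, ih (fun x hx => hl x (by simp [hx])), mul_assoc,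
      qf_comm hΛ hfam hγ (hl γ' (by simp)), ← mul_assoc]

variable [DecidableEq Λ.Path]

include hΛ in
lemma ql_extract {γ : Λ.Path} {l : List Λ.Path} (hγ : γ ∈ l)
    (hl : ∀ γ' ∈ l, Λ.rng γ' = w) :
    QL S T w l = QL S T w (l.erase γ) * QF S T w γ := by
  induction l with
  | nil => simp at hγ
  | cons a l ih =>
    by_cases ha : a = γ
    · subst ha
      rw [List.erase_cons_head, ql_cons]
    · rw [List.erase_cons_tail (by simpa using ha)]
      have hγl : γ ∈ l := by
        rcases List.mem_cons.mp hγ with h | h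
        · exact absurd h.symm ha
        · exact h
      rw [ql_cons, ih hγl (fun x hx => hl x (by simp [hx])), mul_assoc,
        qf_comm hΛ hfam (hl γ (by simp [hγl])) (hl a (by simp)), ← mul_assoc,
        ql_cons]

include hΛ in
lemma ql_mul_s_zero {γ : Λ.Path} {l : List Λ.Path} (hγ : γ ∈ l)
    (hl : ∀ γ' ∈ l, Λ.rng γ' = w) :
    QL S T w l * S γ = 0 := by
  rw [ql_extract hΛ hfam hγ hl, mul_assoc]
  have hr := hl γ hγ
  have h1 : QF S T w γ * S γ = 0 := by
    rw [QF, sub_mul, mul_assoc, ts_self hfam, s_mul_v hfam]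
    subst hr
    rw [v_mul_s hfam, sub_self]
  rw [h1, mul_zero]

include hΛ in
lemma t_mul_ql_zero {γ : Λ.Path} {l : List Λ.Path} (hγ : γ ∈ l)
    (hl : ∀ γ' ∈ l, Λ.rng γ' = w) :
    T γ * QL S T w l = 0 := by
  rw [ql_extract hΛ hfam hγ hl,
    ← qf_mul_ql hΛ hfam (hl γ hγ) (fun x hx => hl x (List.mem_of_mem_erase hx)),
    ← mul_assoc]
  have hr := hl γ hγ
  have h1 : T γ * QF S T w γ = 0 := by
    rw [QF, mul_sub, ← mul_assoc, ts_self hfam, v_mul_t hfam]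
    subst hr
    rw [t_mul_v hfam, sub_self]
  rw [h1, zero_mul]

lemma t_mul_ql {η : Λ.Path} {l : List Λ.Path} (hη : Λ.rng η = w)
    (h : ∀ γ ∈ l, Λ.minPairs η γ = ∅) :
    T η * QL S T w l = T η := by
  induction l with
  | nil =>
    rw [ql_nil]; subst hη; exact t_mul_v hfam η
  | cons γ l ih =>
    rw [ql_cons, ← mul_assoc, ih (fun x hx => h x (by simp [hx]))]
    rw [QF, mul_sub, ← mul_assoc, ts_empty hfam (h γ (by simp)), zero_mul, sub_zero]
    subst hη; exact t_mul_v hfam η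

include hΛ in
lemma foldr_init_mul {γ : Λ.Path} (hγ : Λ.rng γ = w) {l : List Λ.Path}
    (hl : ∀ γ' ∈ l, Λ.rng γ' = w) (b : A) :
    l.foldr (fun x acc => acc * QF S T w x) (b * QF S T w γ)
      = l.foldr (fun x acc => acc * QF S T w x) b * QF S T w γ := by
  induction l generalizing b with
  | nil => rfl
  | cons γ' l' ih =>
    simp only [List.foldr_cons]
    rw [ih (fun x hx => hl x (by simp [hx])) b, mul_assoc,
      qf_comm hΛ hfam hγ (hl γ' (by simp)), ← mul_assoc]

include hΛ in
lemma ql_eq_foldl {l : List Λ.Path} (hl : ∀ γ ∈ l, Λ.rng γ = w) :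
    (l.map fun p => S (Λ.vertex w) - S p * T p).foldl (· * ·) (S (Λ.vertex w))
      = QL S T w l := by
  suffices H : ∀ (l : List Λ.Path), (∀ γ ∈ l, Λ.rng γ = w) → ∀ a : A,
      (l.map fun p => S (Λ.vertex w) - S p * T p).foldl (· * ·) a
        = l.foldr (fun γ acc => acc * QF S T w γ) a by
    exact H l hl (S (Λ.vertex w))
  intro l
  induction l with
  | nil => intro _ a; rfl
  | cons γ l ih =>
    intro hl' a
    simp only [List.map_cons, List.foldl_cons, List.foldr_cons]
    have e : (S (Λ.vertex w) - S γ * T γ) = QF S T w γ := rfl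
    rw [ih (fun x hx => hl' x (by simp [hx])) (a * (S (Λ.vertex w) - S γ * T γ)), e,
      foldr_init_mul hΛ hfam (hl' γ (by simp)) (fun x hx => hl' x (by simp [hx])) a]

include hΛ in
lemma ql_zero_of_FE {l : List Λ.Path} (hl : ∀ γ ∈ l, Λ.rng γ = w)
    (hnd : l.Nodup) (hFE : Λ.FE w {p | p ∈ l}) :
    QL S T w l = 0 := by
  rw [← ql_eq_foldl hΛ hfam hl]
  exact hfam.2.2.2.2 w l hnd hFE

end qlist

end GU
namespace GU

variable {k : ℕ} {Λ : KGraph k}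

/-- common extensions of all elements of `S` with degree exactly `sup_{a ∈ S} deg a`. -/
def CEmin (S : Finset Λ.Path) : Set Λ.Path :=
  {τ | Λ.deg τ = S.sup Λ.deg ∧ ∀ a ∈ S, Ext Λ a τ}

lemma CEmin_singleton (a : Λ.Path) : CEmin ({a} : Finset Λ.Path) = {a} := by
  ext τ
  simp only [CEmin, Finset.sup_singleton, Set.mem_setOf_eq, Set.mem_singleton_iff,
    Finset.mem_singleton]
  constructor
  · rintro ⟨hd, hext⟩
    exact (hext a rfl).antisymm_deg hd
  · rintro rfl
    exact ⟨rfl, fun b hb => hb ▸ Ext.refl τ⟩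

lemma CEmin_finite (hΛ : Λ.FinitelyAligned) (S : Finset Λ.Path) (hS : S.Nonempty) :
    (CEmin S).Finite := by
  induction hS using Finset.Nonempty.cons_induction with
  | singleton a => rw [CEmin_singleton]; exact Set.finite_singleton a
  | cons a S ha hS ih =>
    have hsub : CEmin (Finset.cons a S ha) ⊆ ⋃ σ ∈ CEmin S, Λ.MCE σ a := by
      rintro τ ⟨hd, hext⟩
      rw [Finset.sup_cons] at hd
      set m := S.sup Λ.deg with hm
      have hmτ : ∀ i, m i ≤ Λ.deg τ i := by
        intro i
        have := congrFun hd i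
        simp only [Pi.sup_apply] at this
        omega
      have hfac := Λ.factorisation τ m (Λ.deg τ - m)
        (by funext i; simp only [Pi.add_apply, Pi.sub_apply]; have := hmτ i; omega)
      obtain ⟨⟨σ, ρ⟩, ⟨hsr, hdσ, hdρ, hcomp⟩, huniq⟩ := hfac
      have hσS : σ ∈ CEmin S := by
        refine ⟨hdσ, fun b hb => ?_⟩
        obtain ⟨ξ, hξ1, hξ2⟩ := hext b (Finset.mem_cons.mpr (Or.inr hb))
        have hbm : ∀ i, Λ.deg b i ≤ m i := by
          intro i
          have hle : Λ.deg b ≤ m := Finset.le_sup hb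
          exact hle i
        have hdτ : Λ.deg τ = Λ.deg b + Λ.deg ξ := by
          rw [← hξ2, Λ.deg_comp _ _ hξ1]
        have hfacξ := Λ.factorisation ξ (m - Λ.deg b) (Λ.deg τ - m)
          (by
            funext i
            have h1 := congrFun hdτ i
            have h2 := hmτ i
            have h3 := hbm i
            simp only [Pi.add_apply, Pi.sub_apply] at h1 ⊢
            omega)
        obtain ⟨⟨ξ₁, ξ₂⟩, ⟨hx12, hdξ₁, hdξ₂, hcξ⟩, _⟩ := hfacξ
        have hrξ₁ : Λ.src b = Λ.rng ξ₁ := by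
          rw [hξ1, ← hcξ, Λ.rng_comp _ _ hx12]
        have hcand : Λ.comp (Λ.comp b ξ₁) ξ₂ = τ := by
          rw [Λ.comp_assoc _ _ _ hrξ₁ hx12, hcξ, hξ2]
        have hdcand : Λ.deg (Λ.comp b ξ₁) = m := by
          rw [Λ.deg_comp _ _ hrξ₁, hdξ₁]
          funext i
          simp only [Pi.add_apply, Pi.sub_apply]
          have := hbm i
          omega
        have hscand : Λ.src (Λ.comp b ξ₁) = Λ.rng ξ₂ := by
          rw [Λ.src_comp _ _ hrξ₁, hx12]
        have := huniq (Λ.comp b ξ₁, ξ₂) ⟨hscand, hdcand, hdξ₂, hcand⟩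
        exact ⟨ξ₁, hrξ₁, congrArg Prod.fst this⟩
      refine Set.mem_biUnion hσS ?_
      refine ⟨?_, ⟨ρ, hsr, hcomp⟩, ?_⟩
      · rw [hd, hdσ, sup_comm]
      · obtain ⟨ξ, hξ1, hξ2⟩ := hext a (Finset.mem_cons.mpr (Or.inl rfl))
        exact ⟨ξ, hξ1, hξ2⟩
    exact Set.Finite.subset (Set.Finite.biUnion ih (fun σ _ => MCE_finite hΛ σ a)) hsub

lemma exists_closure (hΛ : Λ.FinitelyAligned) (F : Finset Λ.Path) :
    ∃ E : Finset Λ.Path, F ⊆ E ∧ ∀ a ∈ E, ∀ b ∈ E, Λ.MCE a b ⊆ (E : Set Λ.Path) := by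
  classical
  have hidx : ({S : Finset Λ.Path | S ⊆ F ∧ S.Nonempty}).Finite := by
    apply Set.Finite.subset (F.powerset.finite_toSet)
    intro S hS
    simp only [Finset.coe_powerset, Set.mem_preimage, Set.mem_powerset_iff,
      Finset.coe_subset, Finset.mem_coe, Finset.mem_powerset]
    exact hS.1
  have hEfin : (⋃ S ∈ {S : Finset Λ.Path | S ⊆ F ∧ S.Nonempty}, CEmin S).Finite :=
    Set.Finite.biUnion hidx (fun S hS => CEmin_finite hΛ S hS.2)
  refine ⟨hEfin.toFinset, ?_, ?_⟩
  · intro f hf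
    rw [Set.Finite.mem_toFinset]
    have hmem : ({f} : Finset Λ.Path) ∈ {S : Finset Λ.Path | S ⊆ F ∧ S.Nonempty} :=
      ⟨Finset.singleton_subset_iff.mpr hf, Finset.singleton_nonempty f⟩
    refine Set.mem_biUnion hmem ?_
    rw [CEmin_singleton]
    exact rfl
  · intro a ha b hb
    rw [Set.Finite.mem_toFinset] at ha hb
    obtain ⟨Sa, hSa, haS⟩ := Set.mem_iUnion₂.mp ha
    obtain ⟨Sb, hSb, hbS⟩ := Set.mem_iUnion₂.mp hb
    intro τ hτ
    have : τ ∈ CEmin (Sa ∪ Sb) := by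
      obtain ⟨hdτ, hea, heb⟩ := hτ
      refine ⟨?_, fun c hc => ?_⟩
      · rw [hdτ, haS.1, hbS.1, Finset.sup_union]
      · rcases Finset.mem_union.mp hc with h | h
        · exact (haS.2 c h).trans hea
        · exact (hbS.2 c h).trans heb
    simp only [Set.Finite.coe_toFinset, Set.mem_setOf_eq]
    exact Set.mem_biUnion ⟨Finset.union_subset hSa.1 hSb.1,
      Finset.Nonempty.inl hSa.2⟩ this

end GU
namespace GU

open scoped Classical

variable {k : ℕ} {Λ : KGraph k} {A : Type} [NonUnitalRing A]

lemma gset_finite (E : Finset Λ.Path) (lam : Λ.Path) :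
    {σ : Λ.Path | Λ.src lam = Λ.rng σ ∧ Λ.deg σ ≠ 0 ∧ Λ.comp lam σ ∈ E}.Finite := by
  apply Set.Finite.of_finite_image (f := Λ.comp lam)
  · apply E.finite_toSet.subset
    rintro x ⟨σ, ⟨_, _, h3⟩, rfl⟩
    exact h3
  · rintro σ ⟨h1, _, _⟩ σ' ⟨h1', _, _⟩ hc
    have hd : Λ.deg σ = Λ.deg σ' := by
      have d1 := Λ.deg_comp lam σ h1
      have d2 := Λ.deg_comp lam σ' h1'
      rw [hc, d2] at d1
      funext i
      have := congrFun d1 i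
      simp only [Pi.add_apply] at this
      omega
    exact cancel h1 h1' hd hc

/-- the list of minimal extension-witnesses of `lam` inside `E`. -/
noncomputable def LE (E : Finset Λ.Path) (lam : Λ.Path) : List Λ.Path :=
  (gset_finite E lam).toFinset.toList

lemma mem_LE {E : Finset Λ.Path} {lam σ : Λ.Path} :
    σ ∈ LE E lam ↔ (Λ.src lam = Λ.rng σ ∧ Λ.deg σ ≠ 0 ∧ Λ.comp lam σ ∈ E) := by
  rw [LE, Finset.mem_toList, Set.Finite.mem_toFinset]
  rfl

lemma rng_LE {E : Finset Λ.Path} {lam : Λ.Path} :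
    ∀ σ ∈ LE E lam, Λ.rng σ = Λ.src lam :=
  fun σ hσ => ((mem_LE.mp hσ).1).symm

/-- the element `Q^E_λ = s_λ (∏_{σ}(s_{s(λ)} - p_σ)) t_λ`. -/
noncomputable def QE (S T : Λ.Path → A) (E : Finset Λ.Path) (lam : Λ.Path) : A :=
  S lam * QL S T (Λ.src lam) (LE E lam) * T lam

section qe

variable {S T : Λ.Path → A} (hΛ : Λ.FinitelyAligned) (hfam : Λ.IsKPFamily S T)
  {E : Finset Λ.Path} (hE : ∀ a ∈ E, ∀ b ∈ E, Λ.MCE a b ⊆ (E : Set Λ.Path))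
include hΛ hfam

lemma t_mul_sql (lam : Λ.Path) :
    T lam * (S lam * QL S T (Λ.src lam) (LE E lam)) = QL S T (Λ.src lam) (LE E lam) := by
  rw [← mul_assoc, ts_self hfam, v_mul_ql hfam]

include hE in
lemma qe_mul_s_zero {lam μ : Λ.Path} (hlam : lam ∈ E) (hμ : μ ∈ E)
    (hne : ¬ Ext Λ μ lam) :
    QE S T E lam * S μ = 0 := by
  rw [QE, mul_assoc, ts_fin hΛ hfam, Finset.mul_sum]
  apply Finset.sum_eq_zero
  intro x hx
  rw [Set.Finite.mem_toFinset] at hx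
  have hx1 : x.1 ∈ LE E lam := by
    rw [mem_LE]
    exact ⟨hx.1, minPairs_fst_deg_ne_zero hx hne,
      hE lam hlam μ hμ (comp_mem_MCE hx)⟩
  rw [mul_assoc (S lam), ← mul_assoc (QL S T (Λ.src lam) (LE E lam)),
    ql_mul_s_zero hΛ hfam hx1 rng_LE, zero_mul, mul_zero]

include hE in
lemma t_mul_qe_zero {lam μ : Λ.Path} (hlam : lam ∈ E) (hμ : μ ∈ E)
    (hne : ¬ Ext Λ μ lam) :
    T μ * QE S T E lam = 0 := by
  rw [QE, ← mul_assoc, ← mul_assoc, ts_fin hΛ hfam, Finset.sum_mul, Finset.sum_mul]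
  apply Finset.sum_eq_zero

  intro x hx
  rw [Set.Finite.mem_toFinset] at hx
  have hx2 : x.2 ∈ LE E lam := by
    rw [mem_LE]
    refine ⟨hx.2.1, minPairs_snd_deg_ne_zero hx hne, ?_⟩
    rw [← hx.2.2.1]
    exact hE μ hμ lam hlam (comp_mem_MCE hx)
  rw [mul_assoc (S x.1), t_mul_ql_zero hΛ hfam hx2 rng_LE, mul_zero, zero_mul]

lemma qe_mul_s_ext {lam μ g : Λ.Path} (hg1 : Λ.src μ = Λ.rng g)
    (hg2 : Λ.comp μ g = lam) :
    QE S T E lam * S μ = S lam * QL S T (Λ.src lam) (LE E lam) * T g := by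
  rw [QE, mul_assoc, ts_ext hfam hg1 hg2]

lemma t_mul_qe_ext {lam μ g : Λ.Path} (hg1 : Λ.src μ = Λ.rng g)
    (hg2 : Λ.comp μ g = lam) :
    T μ * QE S T E lam = S g * (QL S T (Λ.src lam) (LE E lam) * T lam) := by
  rw [QE, ← mul_assoc, ← mul_assoc, st_ext hfam hg1 hg2, mul_assoc]

include hE in
lemma qe_mul_p {lam μ : Λ.Path} (hlam : lam ∈ E) (hμ : μ ∈ E) :
    QE S T E lam * (S μ * T μ)
      = if Ext Λ μ lam then QE S T E lam else 0 := by
  split_ifs with hext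
  · obtain ⟨g, hg1, hg2⟩ := hext
    rw [← mul_assoc, qe_mul_s_ext hΛ hfam hg1 hg2,
      mul_assoc (S lam * QL S T (Λ.src lam) (LE E lam)), tt hfam hg1, hg2]
    rfl
  · rw [← mul_assoc, qe_mul_s_zero hΛ hfam hE hlam hμ hext, zero_mul]

include hE in
lemma p_mul_qe {lam μ : Λ.Path} (hlam : lam ∈ E) (hμ : μ ∈ E) :
    (S μ * T μ) * QE S T E lam
      = if Ext Λ μ lam then QE S T E lam else 0 := by
  split_ifs with hext
  · obtain ⟨g, hg1, hg2⟩ := hext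
    rw [mul_assoc, t_mul_qe_ext hΛ hfam hg1 hg2, ← mul_assoc,
      ss hfam hg1, hg2, ← mul_assoc]
    rfl
  · rw [mul_assoc, t_mul_qe_zero hΛ hfam hE hlam hμ hext, mul_zero]

lemma pp_ext {lam μ g : Λ.Path} (hg1 : Λ.src lam = Λ.rng g) (hg2 : Λ.comp lam g = μ) :
    (S lam * T lam) * (S μ * T μ) = S μ * T μ := by
  rw [mul_assoc, ← mul_assoc (T lam), st_ext hfam hg1 hg2, ← mul_assoc,
    ss hfam hg1, hg2]

lemma pp_self (lam : Λ.Path) :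
    (S lam * T lam) * (S lam * T lam) = S lam * T lam := by
  rw [mul_assoc, ← mul_assoc (T lam), ts_self hfam, v_mul_t hfam]

end qe

end GU
namespace GU

open scoped Classical

variable {k : ℕ} {Λ : KGraph k} {A : Type} [NonUnitalRing A]
variable {S T : Λ.Path → A} (hΛ : Λ.FinitelyAligned) (hfam : Λ.IsKPFamily S T)
  {E : Finset Λ.Path} (hE : ∀ a ∈ E, ∀ b ∈ E, Λ.MCE a b ⊆ (E : Set Λ.Path))
include hΛ hfam hE

lemma qe_decomp {lam : Λ.Path} (hlam : lam ∈ E) :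
    S lam * T lam = ∑ τ ∈ E.filter (fun τ => Ext Λ lam τ), QE S T E τ := by
  suffices H : ∀ (N : ℕ) (lam : Λ.Path), lam ∈ E →
      (E.filter (fun τ => Ext Λ lam τ ∧ τ ≠ lam)).card < N →
      S lam * T lam = ∑ τ ∈ E.filter (fun τ => Ext Λ lam τ), QE S T E τ by
    exact H _ lam hlam (Nat.lt_succ_self _)
  intro N
  induction N with
  | zero => intro lam _ h; omega
  | succ N ih =>
    intro lam hlam hcard
    have key : ∀ l : List Λ.Path, (∀ σ ∈ l, σ ∈ LE E lam) →
        S lam * QL S T (Λ.src lam) l * T lam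
          = S lam * T lam -
            ∑ τ ∈ E.filter (fun τ => ∃ γ ∈ l, Ext Λ (Λ.comp lam γ) τ),
              QE S T E τ := by
      intro l
      induction l with
      | nil =>
        intro _
        have hempty : E.filter
            (fun τ => ∃ γ ∈ ([] : List Λ.Path), Ext Λ (Λ.comp lam γ) τ) = ∅ := by
          apply Finset.filter_false_of_mem
          intro τ _
          simp
        rw [ql_nil, s_mul_v hfam, hempty, Finset.sum_empty, sub_zero]
      | cons γ l ihl =>
        intro hmem
        have hγ := hmem γ List.mem_cons_self
        obtain ⟨hγ1, hγ2, hγ3⟩ := mem_LE.mp hγ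
        have hstep : QF S T (Λ.src lam) γ * T lam
            = T lam * (S lam * T lam - S (Λ.comp lam γ) * T (Λ.comp lam γ)) := by
          have e1 : QF S T (Λ.src lam) γ * T lam
              = T lam - S γ * T (Λ.comp lam γ) := by
            rw [QF, sub_mul, v_mul_t hfam, mul_assoc, tt hfam hγ1]
          have e2 : T lam * (S lam * T lam - S (Λ.comp lam γ) * T (Λ.comp lam γ))
              = T lam - S γ * T (Λ.comp lam γ) := by
            rw [mul_sub, ← mul_assoc, ts_self hfam, v_mul_t hfam, ← mul_assoc,
              st_ext hfam hγ1 rfl]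
          rw [e1, e2]
        have hD : S lam * QL S T (Λ.src lam) (γ :: l) * T lam
            = (S lam * QL S T (Λ.src lam) l * T lam) *
              (S lam * T lam - S (Λ.comp lam γ) * T (Λ.comp lam γ)) := by
          rw [ql_cons, ← mul_assoc (S lam) (QL S T (Λ.src lam) l) (QF S T (Λ.src lam) γ),
            mul_assoc (S lam * QL S T (Λ.src lam) l), hstep, ← mul_assoc]
        have hμγE : Λ.comp lam γ ∈ E := hγ3
        have hExtlam : Ext Λ lam (Λ.comp lam γ) := ⟨γ, hγ1, rfl⟩
        have hμγne : Λ.comp lam γ ≠ lam := by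
          intro hcontra
          apply hγ2
          have hdc := Λ.deg_comp lam γ hγ1
          rw [hcontra] at hdc
          funext i
          have := congrFun hdc i
          simp only [Pi.add_apply] at this
          simp only [Pi.zero_apply]
          omega
        have hssub : E.filter (fun τ => Ext Λ (Λ.comp lam γ) τ ∧ τ ≠ Λ.comp lam γ)
            ⊂ E.filter (fun τ => Ext Λ lam τ ∧ τ ≠ lam) := by
          rw [Finset.ssubset_iff_of_subset]
          · refine ⟨Λ.comp lam γ, ?_, ?_⟩
            · rw [Finset.mem_filter]
              exact ⟨hμγE, hExtlam, hμγne⟩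
            · rw [Finset.mem_filter]
              rintro ⟨_, _, hne⟩
              exact hne rfl
          · intro τ hτ
            rw [Finset.mem_filter] at hτ ⊢
            obtain ⟨hτE, hext, hne⟩ := hτ
            refine ⟨hτE, hExtlam.trans hext, ?_⟩
            intro hτlam
            rw [hτlam] at hext
            exact hμγne (hExtlam.antisymm_deg (le_antisymm hext.deg_le hExtlam.deg_le))
        have hlt : (E.filter (fun τ => Ext Λ (Λ.comp lam γ) τ ∧ τ ≠ Λ.comp lam γ)).card < N := by
          have := Finset.card_lt_card hssub
          omega
        have hPμγ := ih (Λ.comp lam γ) hμγE hlt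
        have hsum_lam : (∑ τ ∈ E.filter (fun τ => ∃ γ' ∈ l, Ext Λ (Λ.comp lam γ') τ),
            QE S T E τ) * (S lam * T lam)
            = ∑ τ ∈ E.filter (fun τ => ∃ γ' ∈ l, Ext Λ (Λ.comp lam γ') τ),
              QE S T E τ := by
          rw [Finset.sum_mul]
          apply Finset.sum_congr rfl
          intro τ hτ
          rw [Finset.mem_filter] at hτ
          obtain ⟨hτE, γ', hγ', hext⟩ := hτ
          have hγ'mem := mem_LE.mp (hmem γ' (List.mem_cons_of_mem γ hγ'))
          have : Ext Λ lam τ := Ext.trans ⟨γ', hγ'mem.1, rfl⟩ hext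
          rw [qe_mul_p hΛ hfam hE hτE hlam, if_pos this]
        have hsum_μγ : (∑ τ ∈ E.filter (fun τ => ∃ γ' ∈ l, Ext Λ (Λ.comp lam γ') τ),
            QE S T E τ) * (S (Λ.comp lam γ) * T (Λ.comp lam γ))
            = ∑ τ ∈ (E.filter (fun τ => ∃ γ' ∈ l, Ext Λ (Λ.comp lam γ') τ)).filter
                (fun τ => Ext Λ (Λ.comp lam γ) τ), QE S T E τ := by
          rw [Finset.sum_mul]
          conv_rhs => rw [Finset.sum_filter]
          apply Finset.sum_congr rfl
          intro τ hτ
          rw [Finset.mem_filter] at hτ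
          exact qe_mul_p hΛ hfam hE hτ.1 hμγE
        have hinter : (E.filter (fun τ => ∃ γ' ∈ l, Ext Λ (Λ.comp lam γ') τ)).filter
              (fun τ => Ext Λ (Λ.comp lam γ) τ)
            = (E.filter (fun τ => Ext Λ (Λ.comp lam γ) τ)) ∩
              (E.filter (fun τ => ∃ γ' ∈ l, Ext Λ (Λ.comp lam γ') τ)) := by
          ext τ
          simp only [Finset.mem_filter, Finset.mem_inter]
          tauto
        have hunion : E.filter (fun τ => ∃ γ' ∈ γ :: l, Ext Λ (Λ.comp lam γ') τ)
            = (E.filter (fun τ => Ext Λ (Λ.comp lam γ) τ)) ∪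
              (E.filter (fun τ => ∃ γ' ∈ l, Ext Λ (Λ.comp lam γ') τ)) := by
          ext τ
          simp only [Finset.mem_filter, Finset.mem_union, List.mem_cons]
          constructor
          · rintro ⟨hτE, γ', (rfl | hγ'), hext⟩
            · exact Or.inl ⟨hτE, hext⟩
            · exact Or.inr ⟨hτE, γ', hγ', hext⟩
          · rintro (⟨hτE, hext⟩ | ⟨hτE, γ', hγ', hext⟩)
            · exact ⟨hτE, γ, Or.inl rfl, hext⟩
            · exact ⟨hτE, γ', Or.inr hγ', hext⟩
        have hsum_ui : (∑ τ ∈ (E.filter (fun τ => Ext Λ (Λ.comp lam γ) τ)) ∪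
              (E.filter (fun τ => ∃ γ' ∈ l, Ext Λ (Λ.comp lam γ') τ)), QE S T E τ)
            + (∑ τ ∈ (E.filter (fun τ => Ext Λ (Λ.comp lam γ) τ)) ∩
              (E.filter (fun τ => ∃ γ' ∈ l, Ext Λ (Λ.comp lam γ') τ)), QE S T E τ)
            = (∑ τ ∈ E.filter (fun τ => Ext Λ (Λ.comp lam γ) τ), QE S T E τ)
            + (∑ τ ∈ E.filter (fun τ => ∃ γ' ∈ l, Ext Λ (Λ.comp lam γ') τ), QE S T E τ) :=
          Finset.sum_union_inter
        rw [hD, ihl (fun σ hσ => hmem σ (List.mem_cons_of_mem γ hσ)), sub_mul,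
          mul_sub, mul_sub, pp_self hΛ hfam, pp_ext hΛ hfam hγ1 rfl, hsum_lam, hsum_μγ,
          hinter, hunion, hPμγ]
        rw [eq_sub_of_add_eq hsum_ui]
        abel
    have hfull := key (LE E lam) (fun _ h => h)
    have hUL : E.filter (fun τ => ∃ γ ∈ LE E lam, Ext Λ (Λ.comp lam γ) τ)
        = E.filter (fun τ => Ext Λ lam τ ∧ τ ≠ lam) := by
      ext τ
      simp only [Finset.mem_filter]
      constructor
      · rintro ⟨hτE, γ, hγL, hext⟩
        obtain ⟨hγ1, hγ2, hγ3⟩ := mem_LE.mp hγL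
        refine ⟨hτE, Ext.trans ⟨γ, hγ1, rfl⟩ hext, ?_⟩
        intro hτlam
        apply hγ2
        have h1 : Λ.deg (Λ.comp lam γ) ≤ Λ.deg τ := hext.deg_le
        have hdc := Λ.deg_comp lam γ hγ1
        funext i
        have h2 : Λ.deg (Λ.comp lam γ) i = Λ.deg lam i + Λ.deg γ i := by
          have := congrFun hdc i
          simpa using this
        have h3 : Λ.deg (Λ.comp lam γ) i ≤ Λ.deg lam i := by
          have h4 := h1 i
          rw [hτlam] at h4
          exact h4
        simp only [Pi.zero_apply]
        omega
      · rintro ⟨hτE, ⟨σ, hσ1, hσ2⟩, hne⟩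
        have hσdeg : Λ.deg σ ≠ 0 := by
          intro h0
          apply hne
          rw [← hσ2, eq_vertex_of_deg_zero h0, ← hσ1, Λ.comp_vertex]
        refine ⟨hτE, σ, mem_LE.mpr ⟨hσ1, hσdeg, hσ2 ▸ hτE⟩, hσ2 ▸ Ext.refl τ⟩
    have hins : E.filter (fun τ => Ext Λ lam τ)
        = insert lam (E.filter (fun τ => Ext Λ lam τ ∧ τ ≠ lam)) := by
      ext τ
      simp only [Finset.mem_filter, Finset.mem_insert]
      constructor
      · rintro ⟨hτE, hext⟩
        by_cases hτlam : τ = lam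
        · exact Or.inl hτlam
        · exact Or.inr ⟨hτE, hext, hτlam⟩
      · rintro (rfl | ⟨hτE, hext, _⟩)
        · exact ⟨hlam, Ext.refl τ⟩
        · exact ⟨hτE, hext⟩
    rw [hins, Finset.sum_insert (by simp [Finset.mem_filter])]
    rw [hUL] at hfull
    rw [show QE S T E lam = S lam * QL S T (Λ.src lam) (LE E lam) * T lam from rfl] at *
    rw [hfull]
    abel

end GU
namespace GU

open scoped Classical

variable {k : ℕ} {Λ : KGraph k} {R : Type} [CommRing R]
  {B : Type} [NonUnitalRing B] [Module R B] [SMulCommClass R B B] [IsScalarTower R B B]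
  {s t : Λ.Path → B}

section spanning

variable (hΛ : Λ.FinitelyAligned) (hfam : Λ.IsKPFamily s t)
include hfam

lemma st_src_ne {p q : Λ.Path} (h : Λ.src p ≠ Λ.src q) : s p * t q = 0 := by
  rw [← s_mul_v hfam p, mul_assoc, v_mul_t_ne hfam h, mul_zero]

lemma s_mem_component (p : Λ.Path) :
    s p ∈ kpComponent Λ R s t (fun i => (Λ.deg p i : ℤ)) := by
  have h : s p = s p * t (Λ.vertex (Λ.src p)) := by
    rw [tv hfam, s_mul_v hfam]
  rw [h]
  apply Submodule.subset_span
  refine ⟨p, Λ.vertex (Λ.src p), ?_, rfl⟩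
  funext i
  rw [Λ.deg_vertex]
  simp

lemma t_mem_component (q : Λ.Path) :
    t q ∈ kpComponent Λ R s t (fun i => -((Λ.deg q i : ℤ))) := by
  have h : t q = s (Λ.vertex (Λ.src q)) * t q := (v_mul_t hfam q).symm
  rw [h]
  apply Submodule.subset_span
  refine ⟨Λ.vertex (Λ.src q), q, ?_, rfl⟩
  funext i
  rw [Λ.deg_vertex]
  simp

include hΛ in
lemma gen_mul_mem {n m : Fin k → ℤ} {p q ρ τ : Λ.Path}
    (hpq : (fun i => (Λ.deg p i : ℤ) - (Λ.deg q i : ℤ)) = n)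
    (hρτ : (fun i => (Λ.deg ρ i : ℤ) - (Λ.deg τ i : ℤ)) = m) :
    (s p * t q) * (s ρ * t τ) ∈ kpComponent Λ R s t (n + m) := by
  have expand : (s p * t q) * (s ρ * t τ)
      = ∑ x ∈ (hΛ q ρ).toFinset, (s p * s x.1) * (t x.2 * t τ) := by
    have e0 : (s p * t q) * (s ρ * t τ) = s p * ((t q * s ρ) * t τ) := by
      rw [mul_assoc, ← mul_assoc (t q)]
    rw [e0, ts_fin hΛ hfam, Finset.sum_mul, Finset.mul_sum]
    apply Finset.sum_congr rfl
    intro x _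
    rw [mul_assoc (s x.1), ← mul_assoc (s p)]
  rw [expand]
  apply Submodule.sum_mem
  intro x hx
  rw [Set.Finite.mem_toFinset] at hx
  obtain ⟨h1, h2, h3, _⟩ := hx
  by_cases hc1 : Λ.src p = Λ.rng x.1
  · by_cases hc2 : Λ.src τ = Λ.rng x.2
    · rw [ss hfam hc1, tt hfam hc2]
      apply Submodule.subset_span
      refine ⟨Λ.comp p x.1, Λ.comp τ x.2, ?_, rfl⟩
      funext i
      have e1 := congrFun (Λ.deg_comp p x.1 hc1) i
      have e2 := congrFun (Λ.deg_comp τ x.2 hc2) i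
      have e3 := congrFun (Λ.deg_comp q x.1 h1) i
      have e4 := congrFun (Λ.deg_comp ρ x.2 h2) i
      have e5 := congrFun (congrArg Λ.deg h3) i
      have hn := congrFun hpq i
      have hm := congrFun hρτ i
      simp only [Pi.add_apply] at e1 e2 e3 e4 ⊢
      rw [e3] at e5
      rw [e4] at e5
      rw [e1, e2, ← hn, ← hm]
      push_cast
      omega
    · rw [t_orth hfam hc2, mul_zero]
      exact Submodule.zero_mem _
  · rw [s_orth hfam hc1, zero_mul]
    exact Submodule.zero_mem _

include hΛ in
lemma component_mul_mem {n m : Fin k → ℤ} {a b : B}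
    (ha : a ∈ kpComponent Λ R s t n) (hb : b ∈ kpComponent Λ R s t m) :
    a * b ∈ kpComponent Λ R s t (n + m) := by
  induction ha using Submodule.span_induction with
  | mem x hx =>
    obtain ⟨p, q, hpq, rfl⟩ := hx
    induction hb using Submodule.span_induction with
    | mem y hy =>
      obtain ⟨ρ, τ, hρτ, rfl⟩ := hy
      exact gen_mul_mem hΛ hfam hpq hρτ
    | zero => rw [mul_zero]; exact Submodule.zero_mem _
    | add y z _ _ hy hz => rw [mul_add]; exact Submodule.add_mem _ hy hz
    | smul r y _ hy => rw [mul_smul_comm]; exact Submodule.smul_mem _ _ hy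
  | zero => rw [zero_mul]; exact Submodule.zero_mem _
  | add y z _ _ hy hz => rw [add_mul]; exact Submodule.add_mem _ hy hz
  | smul r y _ hy => rw [smul_mul_assoc]; exact Submodule.smul_mem _ _ hy

include hΛ in
lemma components_top
    (hadj : NonUnitalAlgebra.adjoin R (Set.range s ∪ Set.range t) = ⊤) :
    (⨆ n, kpComponent Λ R s t n) = ⊤ := by
  have hmul : ∀ x y : B, x ∈ (⨆ n, kpComponent Λ R s t n) →
      y ∈ (⨆ n, kpComponent Λ R s t n) → x * y ∈ (⨆ n, kpComponent Λ R s t n) := by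
    intro x y hx hy
    refine Submodule.iSup_induction (x := x) _
      (motive := fun x => x * y ∈ ⨆ n, kpComponent Λ R s t n) hx (fun n a ha => ?_)
      (by show (0 : B) * y ∈ _; rw [zero_mul]; exact Submodule.zero_mem _)
      (fun a b hab hbb => by
        show (a + b) * y ∈ _
        rw [add_mul]; exact Submodule.add_mem _ hab hbb)
    refine Submodule.iSup_induction (x := y) _
      (motive := fun y => a * y ∈ ⨆ n, kpComponent Λ R s t n) hy (fun m b hb => ?_)
      (by show a * (0 : B) ∈ _; rw [mul_zero]; exact Submodule.zero_mem _)
      (fun c d hc hd => by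
        show a * (c + d) ∈ _
        rw [mul_add]; exact Submodule.add_mem _ hc hd)
    exact Submodule.mem_iSup_of_mem (n + m) (component_mul_mem hΛ hfam ha hb)
  have hgen : Set.range s ∪ Set.range t
      ⊆ ↑((⨆ n, kpComponent Λ R s t n).toNonUnitalSubalgebra hmul) := by
    rintro z (⟨p, rfl⟩ | ⟨q, rfl⟩)
    · exact Submodule.mem_iSup_of_mem _ (s_mem_component hfam p)
    · exact Submodule.mem_iSup_of_mem _ (t_mem_component hfam q)
  have hle := NonUnitalAlgebra.adjoin_le hgen
  rw [hadj] at hle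
  apply le_antisymm le_top
  intro z _
  exact hle (by trivial : z ∈ (⊤ : NonUnitalSubalgebra R B))

end spanning

end GU
namespace GU

open scoped Classical

variable {k : ℕ} {Λ : KGraph k} {R : Type} [CommRing R]
  {B : Type} [NonUnitalRing B] [Module R B] [SMulCommClass R B B] [IsScalarTower R B B]
  {s t : Λ.Path → B}
  {A : Type} [NonUnitalRing A] [Module R A] [SMulCommClass R A A] [IsScalarTower R A A]

lemma homogeneous_zero (hΛ : Λ.FinitelyAligned) (hfam : Λ.IsKPFamily s t)
    (π : B →ₙₐ[R] A)
    (hπv : ∀ r : R, r ≠ 0 → ∀ v, π (r • s (Λ.vertex v)) ≠ 0)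
    {n : Fin k → ℤ} {x : B} (hx : x ∈ kpComponent Λ R s t n) (hπx : π x = 0) :
    x = 0 := by
  by_contra hxne
  obtain ⟨N, r, g, hrep⟩ := Submodule.mem_span_set'.mp hx
  have hgi : ∀ i : Fin N, ∃ p q : Λ.Path,
      ((fun j => (Λ.deg p j : ℤ) - (Λ.deg q j : ℤ)) = n) ∧ (g i : B) = s p * t q :=
    fun i => (g i).2
  choose μ ν hdeg hval using hgi
  set I : Finset (Fin N) := Finset.univ.filter (fun i => Λ.src (μ i) = Λ.src (ν i))
    with hI
  have hx2 : x = ∑ i ∈ I, r i • (s (μ i) * t (ν i)) := by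
    rw [← hrep,
      ← Finset.sum_filter_add_sum_filter_not Finset.univ
        (fun i => Λ.src (μ i) = Λ.src (ν i)) (fun i => r i • (g i : B))]
    have hbad : ∑ i ∈ Finset.univ.filter (fun i => ¬ Λ.src (μ i) = Λ.src (ν i)),
        r i • (g i : B) = 0 := by
      apply Finset.sum_eq_zero
      intro i hi
      rw [Finset.mem_filter] at hi
      rw [hval i, st_src_ne hfam hi.2, smul_zero]
    rw [hbad, add_zero]
    apply Finset.sum_congr rfl
    intro i _
    rw [hval i]
  set F₀ : Finset Λ.Path := I.image μ ∪ I.image (fun i => Λ.vertex (Λ.rng (μ i)))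
    with hF₀
  obtain ⟨E, hFE, hE⟩ := exists_closure hΛ F₀
  have hμE : ∀ i ∈ I, μ i ∈ E :=
    fun i hi => hFE (Finset.mem_union_left _ (Finset.mem_image_of_mem μ hi))
  have hvE : ∀ i ∈ I, Λ.vertex (Λ.rng (μ i)) ∈ E :=
    fun i hi => hFE (Finset.mem_union_right _ (Finset.mem_image_of_mem _ hi))
  have hxsum : x = ∑ lam ∈ E, QE s t E lam * x := by
    have hper : ∀ i ∈ I,
        ∑ lam ∈ E, QE s t E lam * (s (μ i) * t (ν i)) = s (μ i) * t (ν i) := by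
      intro i hi
      have hvtx : Λ.vertex (Λ.rng (μ i)) ∈ E := hvE i hi
      have hvext : Ext Λ (Λ.vertex (Λ.rng (μ i))) (μ i) :=
        ⟨μ i, by rw [Λ.src_vertex], Λ.vertex_comp (μ i)⟩
      have hsplit := Finset.sum_filter_add_sum_filter_not E
        (fun lam => Ext Λ (Λ.vertex (Λ.rng (μ i))) lam)
        (fun lam => QE s t E lam * (s (μ i) * t (ν i)))
      have hzero : ∑ lam ∈ E.filter
          (fun lam => ¬ Ext Λ (Λ.vertex (Λ.rng (μ i))) lam),
          QE s t E lam * (s (μ i) * t (ν i)) = 0 := by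
        apply Finset.sum_eq_zero
        intro lam hlam
        rw [Finset.mem_filter] at hlam
        have hnotext : ¬ Ext Λ (μ i) lam := fun h => hlam.2 (hvext.trans h)
        rw [← mul_assoc, qe_mul_s_zero hΛ hfam hE hlam.1 (hμE i hi) hnotext,
          zero_mul]
      have hfilter : ∑ lam ∈ E.filter
          (fun lam => Ext Λ (Λ.vertex (Λ.rng (μ i))) lam),
          QE s t E lam * (s (μ i) * t (ν i)) = s (μ i) * t (ν i) := by
        rw [← Finset.sum_mul, ← qe_decomp hΛ hfam hE hvtx, tv hfam, vv hfam,
          ← mul_assoc, v_mul_s hfam]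
      rw [← hsplit, hzero, add_zero, hfilter]
    calc x = ∑ i ∈ I, r i • (s (μ i) * t (ν i)) := hx2
      _ = ∑ i ∈ I, r i • (∑ lam ∈ E, QE s t E lam * (s (μ i) * t (ν i))) := by
          apply Finset.sum_congr rfl
          intro i hi
          rw [hper i hi]
      _ = ∑ i ∈ I, ∑ lam ∈ E, r i • (QE s t E lam * (s (μ i) * t (ν i))) := by
          apply Finset.sum_congr rfl
          intro i _
          rw [Finset.smul_sum]
      _ = ∑ lam ∈ E, ∑ i ∈ I, r i • (QE s t E lam * (s (μ i) * t (ν i))) :=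
          Finset.sum_comm
      _ = ∑ lam ∈ E, QE s t E lam * x := by
          apply Finset.sum_congr rfl
          intro lam _
          rw [hx2, Finset.mul_sum]
          apply Finset.sum_congr rfl
          intro i _
          rw [mul_smul_comm]
  have hex : ∃ lam ∈ E, QE s t E lam * x ≠ 0 := by
    by_contra hall
    push_neg at hall
    apply hxne
    rw [hxsum]
    exact Finset.sum_eq_zero hall
  obtain ⟨lam, hlamE, hQx⟩ := hex
  set J : Finset (Fin N) := I.filter (fun i => Ext Λ (μ i) lam) with hJ
  have hgex' : ∀ i : Fin N, ∃ gi,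
      i ∈ J → (Λ.src (μ i) = Λ.rng gi ∧ Λ.comp (μ i) gi = lam) := by
    intro i
    by_cases hi : i ∈ J
    · obtain ⟨gi, h1, h2⟩ := (Finset.mem_filter.mp hi).2
      exact ⟨gi, fun _ => ⟨h1, h2⟩⟩
    · exact ⟨Λ.vertex (Λ.src lam), fun h => absurd h hi⟩
  choose gf hgf using hgex'
  have hIofJ : ∀ i ∈ J, i ∈ I := fun i hi => (Finset.mem_filter.mp hi).1
  have hsrcμν : ∀ i ∈ I, Λ.src (μ i) = Λ.src (ν i) :=
    fun i hi => (Finset.mem_filter.mp hi).2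
  have hsrcν : ∀ i ∈ J, Λ.src (ν i) = Λ.rng (gf i) := by
    intro i hi
    rw [← hsrcμν i (hIofJ i hi)]
    exact (hgf i hi).1
  have hsrcgf : ∀ i ∈ J, Λ.src (gf i) = Λ.src lam := by
    intro i hi
    rw [← (hgf i hi).2, Λ.src_comp _ _ (hgf i hi).1]
  have hsrcδ : ∀ i ∈ J, Λ.src (Λ.comp (ν i) (gf i)) = Λ.src lam := by
    intro i hi
    rw [Λ.src_comp _ _ (hsrcν i hi), hsrcgf i hi]
  have hdegδ : ∀ i ∈ J, ∀ j ∈ J,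
      Λ.deg (Λ.comp (ν i) (gf i)) = Λ.deg (Λ.comp (ν j) (gf j)) := by
    intro i hi j hj
    have e1 := Λ.deg_comp (ν i) (gf i) (hsrcν i hi)
    have e2 := Λ.deg_comp (ν j) (gf j) (hsrcν j hj)
    have e3 : Λ.deg lam = Λ.deg (μ i) + Λ.deg (gf i) := by
      rw [← (hgf i hi).2, Λ.deg_comp _ _ (hgf i hi).1]
    have e4 : Λ.deg lam = Λ.deg (μ j) + Λ.deg (gf j) := by
      rw [← (hgf j hj).2, Λ.deg_comp _ _ (hgf j hj).1]
    funext a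
    have f1 := congrFun e1 a
    have f2 := congrFun e2 a
    have f3 := congrFun e3 a
    have f4 := congrFun e4 a
    have f5 := congrFun (hdeg i) a
    have f6 := congrFun (hdeg j) a
    rw [← f6] at f5
    simp only [Pi.add_apply] at f1 f2 f3 f4
    omega
  have hQxe : QE s t E lam * x
      = ∑ i ∈ J, r i • (s lam * QL s t (Λ.src lam) (LE E lam)
          * t (Λ.comp (ν i) (gf i))) := by
    rw [hx2, Finset.mul_sum,
      ← Finset.sum_filter_add_sum_filter_not I (fun i => Ext Λ (μ i) lam)
        (fun i => QE s t E lam * (r i • (s (μ i) * t (ν i))))]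
    have hz : ∑ i ∈ I.filter (fun i => ¬ Ext Λ (μ i) lam),
        QE s t E lam * (r i • (s (μ i) * t (ν i))) = 0 := by
      apply Finset.sum_eq_zero
      intro i hi
      rw [Finset.mem_filter] at hi
      rw [mul_smul_comm, ← mul_assoc,
        qe_mul_s_zero hΛ hfam hE hlamE (hμE i hi.1) hi.2, zero_mul, smul_zero]
    rw [hz, add_zero]
    apply Finset.sum_congr rfl
    intro i hi
    rw [mul_smul_comm, ← mul_assoc, qe_mul_s_ext hΛ hfam (hgf i hi).1 (hgf i hi).2,
      mul_assoc (s lam * QL s t (Λ.src lam) (LE E lam)), tt hfam (hsrcν i hi)]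
  set D : Finset Λ.Path := J.image (fun i => Λ.comp (ν i) (gf i)) with hD
  have hfiber : ∀ d ∈ D, (QE s t E lam * x) * s d
      = (∑ i ∈ J.filter (fun i => Λ.comp (ν i) (gf i) = d), r i)
        • (s lam * QL s t (Λ.src lam) (LE E lam)) := by
    intro d hd
    obtain ⟨j₀, hj₀, hj₀d⟩ := Finset.mem_image.mp hd
    rw [hQxe, Finset.sum_mul]
    have hterm : ∀ i ∈ J,
        (r i • (s lam * QL s t (Λ.src lam) (LE E lam) * t (Λ.comp (ν i) (gf i))))
          * s d
        = if Λ.comp (ν i) (gf i) = d then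
            r i • (s lam * QL s t (Λ.src lam) (LE E lam)) else 0 := by
      intro i hi
      rw [smul_mul_assoc, mul_assoc (s lam * QL s t (Λ.src lam) (LE E lam))]
      by_cases hdd : Λ.comp (ν i) (gf i) = d
      · rw [if_pos hdd, ← hdd, ts_self hfam, hsrcδ i hi, mul_assoc,
          ql_mul_v hfam rng_LE]
      · rw [if_neg hdd]
        have hde : Λ.deg (Λ.comp (ν i) (gf i)) = Λ.deg d := by
          rw [← hj₀d]
          exact hdegδ i hi j₀ hj₀
        rw [ts_deg_eq_ne hfam hde hdd, mul_zero, smul_zero]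
    rw [Finset.sum_congr rfl hterm, ← Finset.sum_filter, ← Finset.sum_smul]
  have hrecon : QE s t E lam * x
      = ∑ d ∈ D, ((QE s t E lam * x) * s d) * t d := by
    have step1 : ∀ d ∈ D, ((QE s t E lam * x) * s d) * t d
        = ∑ i ∈ J.filter (fun i => Λ.comp (ν i) (gf i) = d),
            r i • (s lam * QL s t (Λ.src lam) (LE E lam)
              * t (Λ.comp (ν i) (gf i))) := by
      intro d hd
      rw [hfiber d hd, smul_mul_assoc, Finset.sum_smul]
      apply Finset.sum_congr rfl
      intro i hi
      rw [Finset.mem_filter] at hi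
      rw [hi.2]
    rw [Finset.sum_congr rfl step1,
      Finset.sum_fiberwise_of_maps_to
        (fun i hi => Finset.mem_image_of_mem (fun i => Λ.comp (ν i) (gf i)) hi)]
    exact hQxe
  have hexd : ∃ d ∈ D, (QE s t E lam * x) * s d ≠ 0 := by
    by_contra hall
    push_neg at hall
    apply hQx
    rw [hrecon]
    apply Finset.sum_eq_zero
    intro d hd
    rw [hall d hd, zero_mul]
  obtain ⟨d, hdD, hne0⟩ := hexd
  set cd : R := ∑ i ∈ J.filter (fun i => Λ.comp (ν i) (gf i) = d), r i with hcd
  have hcdne : cd ≠ 0 := by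
    intro h0
    apply hne0
    rw [hfiber d hdD, ← hcd, h0, zero_smul]
  have hslqne : s lam * QL s t (Λ.src lam) (LE E lam) ≠ 0 := by
    intro h0
    apply hne0
    rw [hfiber d hdD, h0, smul_zero]
  have hQLne : QL s t (Λ.src lam) (LE E lam) ≠ 0 := by
    intro h0
    apply hslqne
    rw [h0, mul_zero]
  have hnex : ¬ Λ.Exhaustive (Λ.src lam) {p | p ∈ LE E lam} := by
    intro hexh
    apply hQLne
    apply ql_zero_of_FE hΛ hfam rng_LE (by rw [LE]; exact Finset.nodup_toList _)
    refine ⟨List.finite_toSet _, ?_, hexh⟩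
    intro p hp
    obtain ⟨h1, h2, _⟩ := mem_LE.mp hp
    refine ⟨h1.symm, ?_⟩
    intro hcontra
    apply h2
    rw [hcontra, Λ.deg_vertex]
  obtain ⟨η, hηrng, hηe⟩ : ∃ η, Λ.rng η = Λ.src lam ∧
      ∀ σ ∈ LE E lam, Λ.minPairs η σ = ∅ := by
    rw [KGraph.Exhaustive] at hnex
    push_neg at hnex
    obtain ⟨η, hη1, hη2⟩ := hnex
    exact ⟨η, hη1, fun σ hσ => hη2 σ hσ⟩
  have hfinal : cd • s (Λ.vertex (Λ.src η))
      = t η * (t lam * ((QE s t E lam * x) * s d)) * s η := by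
    rw [hfiber d hdD, ← hcd, mul_smul_comm, t_mul_sql hΛ hfam lam,
      mul_smul_comm, smul_mul_assoc, t_mul_ql hfam hηrng hηe, ts_self hfam]
  apply hπv cd hcdne (Λ.src η)
  rw [hfinal]
  rw [map_mul, map_mul, map_mul, map_mul, map_mul, hπx]
  simp

end GU
/-- graded uniqueness theorem: a `ℤᵏ`-graded homomorphism out of
`KP_R(Λ)` which is nonzero on all `r • s_v` is injective. -/
theorem graded_uniqueness {k : ℕ} (hk : 0 < k) (Λ : KGraph k)
    (hΛ : Λ.FinitelyAligned) (R : Type) [CommRing R]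
    (B : Type) [NonUnitalRing B] [Module R B] [SMulCommClass R B B]
    [IsScalarTower R B B] (s t : Λ.Path → B)
    (hU : Λ.IsUniversalKP R B s t)
    (A : Type) [NonUnitalRing A] [Module R A] [SMulCommClass R A A]
    [IsScalarTower R A A] (𝒜 : (Fin k → ℤ) → Submodule R A)
    (hAgr : ∀ a : A, ∃! c : (Fin k → ℤ) →₀ A,
      (∀ n, c n ∈ 𝒜 n) ∧ (c.sum fun _ x => x) = a)
    (hAmul : ∀ (n m : Fin k → ℤ) (a b : A), a ∈ 𝒜 n → b ∈ 𝒜 m →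
      a * b ∈ 𝒜 (n + m))
    (π : B →ₙₐ[R] A)
    (hπgr : ∀ (n : Fin k → ℤ) (x : B), x ∈ kpComponent Λ R s t n → π x ∈ 𝒜 n)
    (hπv : ∀ r : R, r ≠ 0 → ∀ v, π (r • s (Λ.vertex v)) ≠ 0) :
    Function.Injective π := by
  classical
  obtain ⟨hfam, hadj, -⟩ := hU
  have keyA : ∀ (n : Fin k → ℤ) (x : B), x ∈ kpComponent Λ R s t n → π x = 0 → x = 0 :=
    fun n x hx hπx => GU.homogeneous_zero hΛ hfam π hπv hx hπx
  have keyB : ∀ x : B, π x = 0 → x = 0 := by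
    intro x hπx
    have hxM : x ∈ ⨆ n, kpComponent Λ R s t n := by
      rw [GU.components_top hΛ hfam hadj]
      trivial
    obtain ⟨f, hf, hsum⟩ := (Submodule.mem_iSup_iff_exists_finsupp _ x).mp hxM
    set c : (Fin k → ℤ) →₀ A := f.mapRange (fun b => π b) (map_zero π) with hcdef
    have hc1 : ∀ m, c m ∈ 𝒜 m := by
      intro m
      rw [hcdef, Finsupp.mapRange_apply]
      exact hπgr m (f m) (hf m)
    have hc2 : (c.sum fun _ y => y) = 0 := by
      rw [hcdef, Finsupp.sum_mapRange_index (by simp)]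
      have h3 : (f.sum fun _ b => π b) = π (f.sum fun _ b => b) := by
        rw [Finsupp.sum, Finsupp.sum, map_sum]
      rw [h3, hsum, hπx]
    obtain ⟨c₀, -, huniq⟩ := hAgr 0
    have e1 := huniq c ⟨hc1, hc2⟩
    have e2 := huniq 0 ⟨fun m => Submodule.zero_mem _, by simp⟩
    have hc0 : c = 0 := e1.trans e2.symm
    have hfz : ∀ m, f m = 0 := by
      intro m
      apply keyA m (f m) (hf m)
      have h4 := DFunLike.congr_fun hc0 m
      rw [hcdef, Finsupp.mapRange_apply] at h4
      simpa using h4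
    have hf0 : f = 0 := Finsupp.ext hfz
    rw [← hsum, hf0, Finsupp.sum_zero_index]
  intro a b hab
  have h5 : π (a - b) = 0 := by rw [map_sub, hab, sub_self]
  exact sub_eq_zero.mp (keyB _ h5)
end
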